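/- With the restricted ultrapower setup, the following Łoś theorem holds: for any sentence σ of ℒ_A with parameters from ∏_𝔛 K, N = ∏_𝔛 K / U satisfies [σ] if and only if {i ∈ M : K ⊨ σ[i]} ∈ U. -/
import Mathlib


namespace Paper

/-! ### Syntax of (second-order) arithmetic.

Terms of the language `L_A = {0, 1, +, ·, <}`, with number variables indexed by `ℕ`.
Formulas also allow atomic formulas `t ∈ X_k` (membership in a set variable) and
set quantifiers `allS`; first-order formulas are those avoiding both. -/

inductive PTerm where
  | var : ℕ → PTerm
  | zero : PTerm
  | one : PTerm
  | add : PTerm → PTerm → PTerm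
  | mul : PTerm → PTerm → PTerm

inductive Fml where
  | eq : PTerm → PTerm → Fml
  | lt : PTerm → PTerm → Fml
  | mem : PTerm → ℕ → Fml
  | not : Fml → Fml
  | imp : Fml → Fml → Fml
  | all : ℕ → Fml → Fml
  | allS : ℕ → Fml → Fml

def Fml.and (φ ψ : Fml) : Fml := .not (.imp φ (.not ψ))
def Fml.or (φ ψ : Fml) : Fml := .imp (.not φ) ψ
def Fml.iff (φ ψ : Fml) : Fml := (Fml.imp φ ψ).and (Fml.imp ψ φ)
def Fml.ex (x : ℕ) (φ : Fml) : Fml := .not (.all x (.not φ))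
def Fml.exS (k : ℕ) (φ : Fml) : Fml := .not (.allS k (.not φ))

/-- A structure for the language `{0, 1, +, ·, <}` on a carrier `M`
(bundled, so that several structures can live on the same carrier). -/
structure AStr (M : Type) where
  zero : M
  one : M
  add : M → M → M
  mul : M → M → M
  lt : M → M → Prop

/-- The standard model of arithmetic. -/
def natStr : AStr ℕ := ⟨0, 1, (· + ·), (· * ·), (· < ·)⟩

namespace PTerm

def vars : PTerm → Finset ℕ
  | var n => {n}
  | zero => ∅
  | one => ∅
  | add t u => t.vars ∪ u.vars
  | mul t u => t.vars ∪ u.vars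

/-- Substitution of a term `r` for the variable `x` (used only with `r` closed or
with `vars r ⊆ {x}`, in which case it is capture-free). -/
def subst (x : ℕ) (r : PTerm) : PTerm → PTerm
  | var n => if n = x then r else var n
  | zero => zero
  | one => one
  | add t u => add (subst x r t) (subst x r u)
  | mul t u => mul (subst x r t) (subst x r u)

def val {M : Type} (S : AStr M) (v : ℕ → M) : PTerm → M
  | var n => v n
  | zero => S.zero
  | one => S.one
  | add t u => S.add (t.val S v) (u.val S v)
  | mul t u => S.mul (t.val S v) (u.val S v)

end PTerm

namespace Fml

/-- Free number variables. -/
def freeN : Fml → Finset ℕ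
  | eq t u => t.vars ∪ u.vars
  | lt t u => t.vars ∪ u.vars
  | mem t _ => t.vars
  | not φ => φ.freeN
  | imp φ ψ => φ.freeN ∪ ψ.freeN
  | all x φ => φ.freeN.erase x
  | allS _ φ => φ.freeN

/-- Substitution of a term `r` for the (free) variable `x`. -/
def substN (x : ℕ) (r : PTerm) : Fml → Fml
  | eq t u => eq (PTerm.subst x r t) (PTerm.subst x r u)
  | lt t u => lt (PTerm.subst x r t) (PTerm.subst x r u)
  | mem t k => mem (PTerm.subst x r t) k
  | not φ => not (substN x r φ)
  | imp φ ψ => imp (substN x r φ) (substN x r ψ)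
  | all y φ => if y = x then all y φ else all y (substN x r φ)
  | allS k φ => allS k (substN x r φ)

/-- First-order formulas: no set variables, no set quantifiers. -/
def IsFO : Fml → Prop
  | eq _ _ => True
  | lt _ _ => True
  | mem _ _ => False
  | not φ => φ.IsFO
  | imp φ ψ => φ.IsFO ∧ ψ.IsFO
  | all _ φ => φ.IsFO
  | allS _ _ => False

/-- Arithmetical formulas: set variables allowed as parameters, but no set quantifiers. -/
def IsArith : Fml → Prop
  | eq _ _ => True
  | lt _ _ => True
  | mem _ _ => True
  | not φ => φ.IsArith
  | imp φ ψ => φ.IsArith ∧ ψ.IsArith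
  | all _ φ => φ.IsArith
  | allS _ _ => False

end Fml

/-! ### Satisfaction -/

/-- Satisfaction for a second-order structure `(M, 𝔛)`: number quantifiers range over `M`,
set quantifiers range over `𝔛`. -/
def Sat {M : Type} (S : AStr M) (𝔛 : Set (Set M)) : (ℕ → M) → (ℕ → Set M) → Fml → Prop
  | v, _, .eq t u => t.val S v = u.val S v
  | v, _, .lt t u => S.lt (t.val S v) (u.val S v)
  | v, w, .mem t k => t.val S v ∈ w k
  | v, w, .not φ => ¬ Sat S 𝔛 v w φ
  | v, w, .imp φ ψ => Sat S 𝔛 v w φ → Sat S 𝔛 v w ψ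
  | v, w, .all x φ => ∀ a : M, Sat S 𝔛 (Function.update v x a) w φ
  | v, w, .allS k φ => ∀ X ∈ 𝔛, Sat S 𝔛 v (Function.update w k X) φ

/-- First-order satisfaction. -/
def SatFO {M : Type} (S : AStr M) (v : ℕ → M) (φ : Fml) : Prop :=
  Sat S Set.univ v (fun _ => ∅) φ

/-- `M ⊨ T` for a first-order theory `T`. -/
def ModelsT {M : Type} (S : AStr M) (T : Set Fml) : Prop :=
  ∀ φ ∈ T, ∀ v, SatFO S v φ

/-- Semantic consequence (equivalently, by the completeness theorem, provability). -/
def Proves (T : Set Fml) (φ : Fml) : Prop :=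
  ∀ (M : Type) (S : AStr M), ModelsT S T → ∀ v, SatFO S v φ

/-- Consistency (equivalently, by the completeness theorem, having a model). -/
def ConsistentT (T : Set Fml) : Prop :=
  ∃ (M : Type) (S : AStr M), ModelsT S T

def IsFOSentence (φ : Fml) : Prop := φ.IsFO ∧ φ.freeN = ∅

/-- Completeness of a theory. -/
def CompleteT (T : Set Fml) : Prop :=
  ∀ φ, IsFOSentence φ → (Proves T φ ∨ Proves T φ.not)

/-! ### Peano arithmetic -/

def numeral : ℕ → PTerm
  | 0 => .zero
  | n + 1 => .add (numeral n) .one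

def univClosure (φ : Fml) : Fml := (φ.freeN.sort (· ≤ ·)).foldr Fml.all φ

/-- The induction axiom for `φ` in the variable `x` (before taking universal closure). -/
def indFml (φ : Fml) (x : ℕ) : Fml :=
  .imp ((φ.substN x .zero).and (.all x (.imp φ (φ.substN x (.add (.var x) .one)))))
    (.all x φ)

/-- The axioms of first-order Peano arithmetic `PA`. -/
def PAax : Set Fml :=
  {Fml.all 0 (.not (.eq (.add (.var 0) .one) .zero)),
   Fml.all 0 (.all 1 (.imp (.eq (.add (.var 0) .one) (.add (.var 1) .one))
     (.eq (.var 0) (.var 1)))),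
   Fml.all 0 (.eq (.add (.var 0) .zero) (.var 0)),
   Fml.all 0 (.all 1 (.eq (.add (.var 0) (.add (.var 1) .one))
     (.add (.add (.var 0) (.var 1)) .one))),
   Fml.all 0 (.eq (.mul (.var 0) .zero) .zero),
   Fml.all 0 (.all 1 (.eq (.mul (.var 0) (.add (.var 1) .one))
     (.add (.mul (.var 0) (.var 1)) (.var 0)))),
   Fml.all 0 (.all 1 (Fml.iff (.lt (.var 0) (.var 1))
     (Fml.ex 2 (.eq (.add (.var 0) (.add (.var 2) .one)) (.var 1)))))} ∪
  {ψ | ∃ φ x, Fml.IsFO φ ∧ ψ = univClosure (indFml φ x)}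

/-! ### Gödel coding -/

/-- The Cantor pairing function (the canonical pairing `⟨·,·⟩`). -/
def cpair (a b : ℕ) : ℕ := (a + b) * (a + b + 1) / 2 + a

def PTerm.code : PTerm → ℕ
  | .var n => cpair 0 n
  | .zero => cpair 1 0
  | .one => cpair 2 0
  | .add t u => cpair 3 (cpair t.code u.code)
  | .mul t u => cpair 4 (cpair t.code u.code)

def Fml.code : Fml → ℕ
  | .eq t u => cpair 5 (cpair t.code u.code)
  | .lt t u => cpair 6 (cpair t.code u.code)
  | .not φ => cpair 7 φ.code
  | .imp φ ψ => cpair 8 (cpair φ.code ψ.code)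
  | .all x φ => cpair 9 (cpair x φ.code)
  | .mem t k => cpair 10 (cpair t.code k)
  | .allS k φ => cpair 11 (cpair k φ.code)

/-- A theory identified with its set of Gödel codes. -/
def theoryCode (T : Set Fml) : Set ℕ := Fml.code '' T

/-! ### The arithmetical hierarchy (syntactic classes) -/

inductive IsDelta0 : Fml → Prop
  | eq (t u) : IsDelta0 (.eq t u)
  | lt (t u) : IsDelta0 (.lt t u)
  | mem (t k) : IsDelta0 (.mem t k)
  | not {φ} : IsDelta0 φ → IsDelta0 φ.not
  | imp {φ ψ} : IsDelta0 φ → IsDelta0 ψ → IsDelta0 (φ.imp ψ)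
  | ball {φ} (x t) : x ∉ PTerm.vars t → IsDelta0 φ →
      IsDelta0 (.all x (.imp (.lt (.var x) t) φ))

def IsSigma01 (φ : Fml) : Prop := ∃ x ψ, IsDelta0 ψ ∧ φ = Fml.ex x ψ

def IsPi01 (φ : Fml) : Prop := ∃ x ψ, IsDelta0 ψ ∧ φ = Fml.all x ψ

/-! ### Subsystems of second-order arithmetic, semantically -/

/-- The basic axioms (`PA⁻`, a discretely ordered commutative semiring). -/
def PAminusSem {M : Type} (S : AStr M) : Prop :=
  (∀ a b c : M, S.add a (S.add b c) = S.add (S.add a b) c) ∧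
  (∀ a b : M, S.add a b = S.add b a) ∧
  (∀ a b c : M, S.mul a (S.mul b c) = S.mul (S.mul a b) c) ∧
  (∀ a b : M, S.mul a b = S.mul b a) ∧
  (∀ a b c : M, S.mul a (S.add b c) = S.add (S.mul a b) (S.mul a c)) ∧
  (∀ a : M, S.add a S.zero = a) ∧
  (∀ a : M, S.mul a S.zero = S.zero) ∧
  (∀ a : M, S.mul a S.one = a) ∧
  (∀ a b c : M, S.lt a b → S.lt b c → S.lt a c) ∧
  (∀ a : M, ¬ S.lt a a) ∧
  (∀ a b : M, S.lt a b ∨ a = b ∨ S.lt b a) ∧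
  (∀ a b c : M, S.lt a b → S.lt (S.add a c) (S.add b c)) ∧
  (∀ a b c : M, S.lt S.zero c → S.lt a b → S.lt (S.mul a c) (S.mul b c)) ∧
  (∀ a b : M, S.lt a b → ∃ c : M, S.add a c = b) ∧
  S.lt S.zero S.one ∧
  (∀ a : M, S.lt S.zero a → a = S.one ∨ S.lt S.one a) ∧
  (∀ a : M, a = S.zero ∨ S.lt S.zero a)

/-- `(M,𝔛)` satisfies the induction axiom for `φ` in the variable `x`
(with arbitrary number and set parameters). -/
def SatInd {M : Type} (S : AStr M) (𝔛 : Set (Set M)) (φ : Fml) (x : ℕ) : Prop :=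
  ∀ (v : ℕ → M) (w : ℕ → Set M), (∀ k, w k ∈ 𝔛) →
    (Sat S 𝔛 (Function.update v x S.zero) w φ ∧
      ∀ a, Sat S 𝔛 (Function.update v x a) w φ →
        Sat S 𝔛 (Function.update v x (S.add a S.one)) w φ) →
    ∀ a, Sat S 𝔛 (Function.update v x a) w φ

/-- `(M,𝔛) ⊨ RCA₀`: basic axioms, `Σ⁰₁` induction and `Δ⁰₁` comprehension. -/
def SatRCA0 {M : Type} (S : AStr M) (𝔛 : Set (Set M)) : Prop :=
  PAminusSem S ∧
  (∀ φ x, IsSigma01 φ → SatInd S 𝔛 φ x) ∧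
  (∀ φ ψ x, IsSigma01 φ → IsPi01 ψ →
    ∀ (v : ℕ → M) (w : ℕ → Set M), (∀ k, w k ∈ 𝔛) →
      (∀ a, Sat S 𝔛 (Function.update v x a) w φ ↔ Sat S 𝔛 (Function.update v x a) w ψ) →
      {a : M | Sat S 𝔛 (Function.update v x a) w φ} ∈ 𝔛)

/-- `(M,𝔛) ⊨ ACA₀`: basic axioms, the induction axiom and arithmetical comprehension. -/
def SatACA0 {M : Type} (S : AStr M) (𝔛 : Set (Set M)) : Prop :=
  PAminusSem S ∧
  (∀ X ∈ 𝔛, S.zero ∈ X → (∀ a, a ∈ X → S.add a S.one ∈ X) → ∀ a, a ∈ X) ∧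
  (∀ φ x, Fml.IsArith φ → ∀ (v : ℕ → M) (w : ℕ → Set M), (∀ k, w k ∈ 𝔛) →
    {a : M | Sat S 𝔛 (Function.update v x a) w φ} ∈ 𝔛)

/-! ### Arithmetization inside a model

All notions below unfold the standard (`Δ₀`/`Σ₁`) arithmetized definitions at the
meta-level, using the operations of a structure `S : AStr M`.  On models of `IΣ₁`
they agree with satisfaction of the corresponding arithmetic formulas. -/

namespace AStr

variable {M : Type} (S : AStr M)

/-- Interpretation of numerals. -/
def num : ℕ → M
  | 0 => S.zero
  | n + 1 => S.add (num n) S.one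

def le (a b : M) : Prop := S.lt a b ∨ a = b

def two : M := S.add S.one S.one

/-- `p = ⟨a,b⟩` for the Cantor pairing function: `2p = (a+b)(a+b+1) + 2a`. -/
def PairRel (p a b : M) : Prop :=
  S.mul S.two p = S.add (S.mul (S.add a b) (S.add (S.add a b) S.one)) (S.mul S.two a)

/-- `r = a mod m`. -/
def ModRel (a m r : M) : Prop := S.lt r m ∧ ∃ q, a = S.add (S.mul q m) r

/-- Gödel's β-function: `x = β(c, i)` where `c = ⟨a,b⟩` and `x = a mod (1 + (i+1)b)`. -/
def BetaRel (c i x : M) : Prop :=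
  ∃ a b, S.PairRel c a b ∧ S.ModRel a (S.add S.one (S.mul (S.add i S.one) b)) x

/-- `s` codes a sequence of length `l` (as `s = ⟨c, l⟩`). -/
def SeqLen (s l : M) : Prop := ∃ c, S.PairRel s c l

/-- The `i`-th entry of the sequence coded by `s` is `x`. -/
def SeqAt (s i x : M) : Prop := ∃ c l, S.PairRel s c l ∧ S.lt i l ∧ S.BetaRel c i x

/-- The fixed `Δ₀` coding formula `x ∈ y` for (bounded) sets:
`y = ⟨a,b⟩` and `a mod (1 + (x+1)b) = 1` with modulus `> 1`, and `x < y`. -/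
def MemRel (x y : M) : Prop :=
  S.lt x y ∧ ∃ a b, S.PairRel y a b ∧
    S.lt S.one (S.add S.one (S.mul (S.add x S.one) b)) ∧
    S.ModRel a (S.add S.one (S.mul (S.add x S.one) b)) S.one

/-- Tagged pairs, used for codes of syntax: `x = ⟨tag, payload⟩`. -/
def Node (x tag payload : M) : Prop := S.PairRel x tag payload

/-- `x` is the code of the variable `v`. -/
def VarC (v x : M) : Prop := S.Node x (S.num 0) v

def AddC (t u y : M) : Prop := ∃ p, S.PairRel p t u ∧ S.Node y (S.num 3) p
def MulC (t u y : M) : Prop := ∃ p, S.PairRel p t u ∧ S.Node y (S.num 4) p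
def EqC (t u y : M) : Prop := ∃ p, S.PairRel p t u ∧ S.Node y (S.num 5) p
def LtC (t u y : M) : Prop := ∃ p, S.PairRel p t u ∧ S.Node y (S.num 6) p
def NotC (x y : M) : Prop := S.Node y (S.num 7) x
def ImpC (x y z : M) : Prop := ∃ p, S.PairRel p x y ∧ S.Node z (S.num 8) p
def AllC (v x y : M) : Prop := ∃ p, S.PairRel p v x ∧ S.Node y (S.num 9) p

/-- `s` codes a construction sequence for terms. -/
def IsTermConSeq (s : M) : Prop :=
  ∀ i x, S.SeqAt s i x →
    (∃ v, S.VarC v x) ∨ S.Node x (S.num 1) (S.num 0) ∨ S.Node x (S.num 2) (S.num 0) ∨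
    (∃ j k y z, S.lt j i ∧ S.lt k i ∧ S.SeqAt s j y ∧ S.SeqAt s k z ∧
      (S.AddC y z x ∨ S.MulC y z x))

/-- `x` is a term code (in the sense of `M`, possibly nonstandard). -/
def TermCodeM (x : M) : Prop := ∃ s i, S.IsTermConSeq s ∧ S.SeqAt s i x

/-- `s` codes a construction sequence for (first-order) formulas. -/
def IsFmlConSeq (s : M) : Prop :=
  ∀ i x, S.SeqAt s i x →
    (∃ t u, S.TermCodeM t ∧ S.TermCodeM u ∧ (S.EqC t u x ∨ S.LtC t u x)) ∨
    (∃ j y, S.lt j i ∧ S.SeqAt s j y ∧ S.NotC y x) ∨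
    (∃ j k y z, S.lt j i ∧ S.lt k i ∧ S.SeqAt s j y ∧ S.SeqAt s k z ∧ S.ImpC y z x) ∨
    (∃ j v y, S.lt j i ∧ S.SeqAt s j y ∧ S.AllC v y x)

/-- `x` is a formula code (in the sense of `M`, possibly nonstandard). -/
def FmlCodeM (x : M) : Prop := ∃ s i, S.IsFmlConSeq s ∧ S.SeqAt s i x

/-- Construction sequences of pairs (term code, occurrence flag for the variable `v`). -/
def IsOccConSeq (v s : M) : Prop :=
  ∀ i p, S.SeqAt s i p → ∃ x f, S.PairRel p x f ∧
    ((S.VarC v x ∧ f = S.num 1) ∨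
     (∃ u, S.VarC u x ∧ u ≠ v ∧ f = S.num 0) ∨
     ((S.Node x (S.num 1) (S.num 0) ∨ S.Node x (S.num 2) (S.num 0)) ∧ f = S.num 0) ∨
     (∃ j k y z g h pj pk, S.lt j i ∧ S.lt k i ∧ S.SeqAt s j pj ∧ S.SeqAt s k pk ∧
       S.PairRel pj y g ∧ S.PairRel pk z h ∧ (S.AddC y z x ∨ S.MulC y z x) ∧
       ((f = S.num 1 ∧ (g = S.num 1 ∨ h = S.num 1)) ∨
        (f = S.num 0 ∧ g = S.num 0 ∧ h = S.num 0))))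

/-- `f = 1` iff the variable `v` occurs in the term coded by `t` (`f ∈ {0,1}`). -/
def OccT (v t f : M) : Prop :=
  ∃ s i p, S.IsOccConSeq v s ∧ S.SeqAt s i p ∧ S.PairRel p t f

/-- Construction sequences of pairs (formula code, freeness flag for the variable `v`). -/
def IsFreeConSeq (v s : M) : Prop :=
  ∀ i p, S.SeqAt s i p → ∃ x f, S.PairRel p x f ∧
    ((∃ t u, (S.EqC t u x ∨ S.LtC t u x) ∧
       ((f = S.num 1 ∧ (S.OccT v t (S.num 1) ∨ S.OccT v u (S.num 1))) ∨
        (f = S.num 0 ∧ S.OccT v t (S.num 0) ∧ S.OccT v u (S.num 0)))) ∨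
     (∃ j y g pj, S.lt j i ∧ S.SeqAt s j pj ∧ S.PairRel pj y g ∧ S.NotC y x ∧ f = g) ∨
     (∃ j k y z g h pj pk, S.lt j i ∧ S.lt k i ∧ S.SeqAt s j pj ∧ S.SeqAt s k pk ∧
       S.PairRel pj y g ∧ S.PairRel pk z h ∧ S.ImpC y z x ∧
       ((f = S.num 1 ∧ (g = S.num 1 ∨ h = S.num 1)) ∨
        (f = S.num 0 ∧ g = S.num 0 ∧ h = S.num 0))) ∨
     (∃ j w y g pj, S.lt j i ∧ S.SeqAt s j pj ∧ S.PairRel pj y g ∧ S.AllC w y x ∧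
       ((w = v ∧ f = S.num 0) ∨ (w ≠ v ∧ f = g))))

/-- `f = 1` iff the variable `v` is free in the formula coded by `φ`. -/
def FreeF (v φ f : M) : Prop :=
  ∃ s i p, S.IsFreeConSeq v s ∧ S.SeqAt s i p ∧ S.PairRel p φ f

/-- Construction sequences of pairs (term code, result of substituting `t` for `v`). -/
def IsSubTConSeq (v t s : M) : Prop :=
  ∀ i p, S.SeqAt s i p → ∃ x x', S.PairRel p x x' ∧
    ((S.VarC v x ∧ x' = t) ∨
     (∃ u, S.VarC u x ∧ u ≠ v ∧ x' = x) ∨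
     ((S.Node x (S.num 1) (S.num 0) ∨ S.Node x (S.num 2) (S.num 0)) ∧ x' = x) ∨
     (∃ j k y z y' z' pj pk, S.lt j i ∧ S.lt k i ∧ S.SeqAt s j pj ∧ S.SeqAt s k pk ∧
       S.PairRel pj y y' ∧ S.PairRel pk z z' ∧
       ((S.AddC y z x ∧ S.AddC y' z' x') ∨ (S.MulC y z x ∧ S.MulC y' z' x'))))

/-- Substitution of the term (code) `t` for the variable `v` in terms: `x' = x[t/v]`. -/
def SubT (v t x x' : M) : Prop :=
  ∃ s i p, S.IsSubTConSeq v t s ∧ S.SeqAt s i p ∧ S.PairRel p x x'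

/-- Construction sequences for capture-free substitution in formulas. -/
def IsSubFConSeq (v t s : M) : Prop :=
  ∀ i p, S.SeqAt s i p → ∃ x x', S.PairRel p x x' ∧
    ((∃ a b a' b', S.SubT v t a a' ∧ S.SubT v t b b' ∧
       ((S.EqC a b x ∧ S.EqC a' b' x') ∨ (S.LtC a b x ∧ S.LtC a' b' x'))) ∨
     (∃ j y y' pj, S.lt j i ∧ S.SeqAt s j pj ∧ S.PairRel pj y y' ∧
       S.NotC y x ∧ S.NotC y' x') ∨
     (∃ j k y z y' z' pj pk, S.lt j i ∧ S.lt k i ∧ S.SeqAt s j pj ∧ S.SeqAt s k pk ∧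
       S.PairRel pj y y' ∧ S.PairRel pk z z' ∧ S.ImpC y z x ∧ S.ImpC y' z' x') ∨
     (∃ w y, S.AllC w y x ∧
       ((w = v ∧ x' = x) ∨
        (w ≠ v ∧ (S.OccT w t (S.num 0) ∨ S.FreeF v y (S.num 0)) ∧
          ∃ j y' pj, S.lt j i ∧ S.SeqAt s j pj ∧ S.PairRel pj y y' ∧ S.AllC w y' x'))))

/-- Capture-free substitution in formulas: `x' = x[t/v]`, with `t` substitutable for `v`. -/
def SubF (v t x x' : M) : Prop :=
  ∃ s i p, S.IsSubFConSeq v t s ∧ S.SeqAt s i p ∧ S.PairRel p x x'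

/-- `x` is (the code of) a generalization `∀v₁ ⋯ ∀vₖ y` of `y`. -/
def GenOf (y x : M) : Prop :=
  ∃ s i, S.SeqAt s (S.num 0) y ∧ S.SeqAt s i x ∧
    ∀ j z z', S.SeqAt s j z → S.SeqAt s (S.add j S.one) z' → S.le (S.add j S.one) i →
      ∃ v, S.AllC v z z'

/-- Codes of instances of the logical axiom schemes (a Hilbert-style calculus with
modus ponens as the only rule; axioms are taken together with their generalizations). -/
def LogAxCore (x : M) : Prop :=
  -- A1 : a → (b → a)
  (∃ a b y, S.FmlCodeM a ∧ S.FmlCodeM b ∧ S.ImpC b a y ∧ S.ImpC a y x) ∨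
  -- A2 : (a → (b → c)) → ((a → b) → (a → c))
  (∃ a b c bc abc ab ac r, S.FmlCodeM a ∧ S.FmlCodeM b ∧ S.FmlCodeM c ∧
    S.ImpC b c bc ∧ S.ImpC a bc abc ∧ S.ImpC a b ab ∧ S.ImpC a c ac ∧
    S.ImpC ab ac r ∧ S.ImpC abc r x) ∨
  -- A3 : (¬b → ¬a) → (a → b)
  (∃ a b na nb l r, S.FmlCodeM a ∧ S.FmlCodeM b ∧ S.NotC a na ∧ S.NotC b nb ∧
    S.ImpC nb na l ∧ S.ImpC a b r ∧ S.ImpC l r x) ∨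
  -- A4 : ∀v a → a[t/v]
  (∃ v t a a' al, S.TermCodeM t ∧ S.FmlCodeM a ∧ S.AllC v a al ∧ S.SubF v t a a' ∧
    S.ImpC al a' x) ∨
  -- A5 : ∀v (a → b) → (∀v a → ∀v b)
  (∃ v a b ab alab ala alb r, S.FmlCodeM a ∧ S.FmlCodeM b ∧ S.ImpC a b ab ∧
    S.AllC v ab alab ∧ S.AllC v a ala ∧ S.AllC v b alb ∧ S.ImpC ala alb r ∧
    S.ImpC alab r x) ∨
  -- A6 : a → ∀v a, for v not free in a
  (∃ v a ala, S.FmlCodeM a ∧ S.FreeF v a (S.num 0) ∧ S.AllC v a ala ∧ S.ImpC a ala x) ∨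
  -- E1 : t = t
  (∃ t, S.TermCodeM t ∧ S.EqC t t x) ∨
  -- E2 : u = w → w = u (variables)
  (∃ u w vu vw e1 e2, S.VarC u vu ∧ S.VarC w vw ∧ S.EqC vu vw e1 ∧ S.EqC vw vu e2 ∧
    S.ImpC e1 e2 x) ∨
  -- E3 : u = w → (w = z → u = z) (variables)
  (∃ u w z vu vw vz e1 e2 e3 r, S.VarC u vu ∧ S.VarC w vw ∧ S.VarC z vz ∧
    S.EqC vu vw e1 ∧ S.EqC vw vz e2 ∧ S.EqC vu vz e3 ∧ S.ImpC e2 e3 r ∧ S.ImpC e1 r x) ∨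
  -- E4 : congruence of +, ·, < with respect to = (variables)
  (∃ u1 w1 u2 w2 a1 b1 a2 b2 e1 e2 s1 s2 es r,
    S.VarC u1 a1 ∧ S.VarC w1 b1 ∧ S.VarC u2 a2 ∧ S.VarC w2 b2 ∧
    S.EqC a1 b1 e1 ∧ S.EqC a2 b2 e2 ∧
    ((S.AddC a1 a2 s1 ∧ S.AddC b1 b2 s2 ∧ S.EqC s1 s2 es) ∨
     (S.MulC a1 a2 s1 ∧ S.MulC b1 b2 s2 ∧ S.EqC s1 s2 es) ∨
     (S.LtC a1 a2 s1 ∧ S.LtC b1 b2 s2 ∧ S.ImpC s1 s2 es)) ∧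
    S.ImpC e2 es r ∧ S.ImpC e1 r x) ∨
  -- E5 : congruence of = (variables)
  (∃ u1 w1 u2 w2 a1 b1 a2 b2 e1 e2 d1 d2 inner r,
    S.VarC u1 a1 ∧ S.VarC w1 b1 ∧ S.VarC u2 a2 ∧ S.VarC w2 b2 ∧
    S.EqC a1 b1 e1 ∧ S.EqC a2 b2 e2 ∧ S.EqC a1 a2 d1 ∧ S.EqC b1 b2 d2 ∧
    S.ImpC d1 d2 inner ∧ S.ImpC e2 inner r ∧ S.ImpC e1 r x)

/-- Logical axioms: generalizations of instances of the axiom schemes. -/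
def LogAx (x : M) : Prop := ∃ y, S.LogAxCore y ∧ S.GenOf y x

/-- `s` codes a proof of `φ` from the set `Γ ⊆ M` of (codes of) sentences:
every entry is a logical axiom, a member of `Γ`, or follows by modus ponens. -/
def ProofFrom (Γ : Set M) (s φ : M) : Prop :=
  (∃ i, S.SeqAt s i φ) ∧
  ∀ i x, S.SeqAt s i x →
    S.LogAx x ∨ x ∈ Γ ∨
    (∃ j k y z, S.lt j i ∧ S.lt k i ∧ S.SeqAt s j y ∧ S.SeqAt s k z ∧ S.ImpC y x z)

/-- Provability (in the sense of `M`) from the axiom set `Γ ⊆ M`. -/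
def ProvFrom (Γ : Set M) (φ : M) : Prop := ∃ s, S.ProofFrom Γ s φ

/-- `M ⊨ Con_Γ` : there is no (possibly nonstandard) proof of a contradiction from `Γ`. -/
def ConOf (Γ : Set M) : Prop :=
  ¬ ∃ φ nφ, S.NotC φ nφ ∧ S.ProvFrom Γ φ ∧ S.ProvFrom Γ nφ

/-- `M ⊨ Con_T` for a (standard) theory `T`: `M` thinks every finite subtheory
of `T` is consistent. -/
def SatConTheory (T : Set Fml) : Prop :=
  ∀ F : Finset Fml, ↑F ⊆ T → S.ConOf {x : M | ∃ φ ∈ F, x = S.num (Fml.code φ)}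

/-! ### Coded sets, standard systems, filters on `P_𝔛` -/

/-- `A` is unbounded in `M`. -/
def Unb (A : Set M) : Prop := ∀ b, ∃ a ∈ A, S.lt b a

/-- `P_𝔛`: the collection of unbounded sets in `𝔛` (a partial order under `⊆`). -/
def PX (𝔛 : Set (Set M)) : Set (Set M) := {A | A ∈ 𝔛 ∧ S.Unb A}

/-- The `a`-th slice `(A)_a = {b | ⟨a,b⟩ ∈ A}`. -/
def SliceAt (A : Set M) (a : M) : Set M := {b | ∃ p, S.PairRel p a b ∧ p ∈ A}

/-- A function `M → M` is coded in `𝔛` if its graph (via the canonical pairing)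
belongs to `𝔛`. -/
def CodedFun (𝔛 : Set (Set M)) (f : M → M) : Prop :=
  ∃ G ∈ 𝔛, ∀ a b, f a = b ↔ b ∈ S.SliceAt G a

/-- A family `F` of sets is definable (over `(M,𝔛)`) if `{a | (A)_a ∈ F} ∈ 𝔛`
for every `A ∈ 𝔛`. -/
def DefinableFam (𝔛 F : Set (Set M)) : Prop :=
  ∀ A ∈ 𝔛, {a : M | S.SliceAt A a ∈ F} ∈ 𝔛

/-- `F` is a complete family: every function coded in `𝔛` with bounded range is
constant on some member of `F`. -/
def CompleteOn (𝔛 F : Set (Set M)) : Prop :=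
  ∀ f : M → M, S.CodedFun 𝔛 f → (∃ b, ∀ a, S.lt (f a) b) →
    ∃ A ∈ F, ∀ x ∈ A, ∀ y ∈ A, f x = f y

/-- The standard system `SSy(M)`: standard parts of the `M`-coded sets. -/
def SSy : Set (Set ℕ) := {A | ∃ c : M, ∀ n : ℕ, (n ∈ A ↔ S.MemRel (S.num n) c)}

/-- `M` is nonstandard. -/
def Nonstd : Prop := ∃ a : M, ∀ n : ℕ, a ≠ S.num n

/-- `M` is recursively saturated: every recursive type (in the variable `0`, with
finitely many parameters assigned to the variables `1, …, k`) that is finitely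
realized in `M` is realized in `M`. -/
def RecSat : Prop :=
  ∀ (p : Set Fml) (k : ℕ) (par : ℕ → M),
    (∀ φ ∈ p, Fml.IsFO φ ∧ φ.freeN ⊆ Finset.range (k + 1)) →
    ComputablePred (fun n => ∃ φ ∈ p, Fml.code φ = n) →
    (∀ F : Finset Fml, ↑F ⊆ p →
      ∃ a : M, ∀ φ ∈ F, SatFO S (fun i => if i = 0 then a else par i) φ) →
    ∃ a : M, ∀ φ ∈ p, SatFO S (fun i => if i = 0 then a else par i) φ

/-- `c` is the least code of the (bounded) set `A`. -/
def IsLeastCode (A : Set M) (c : M) : Prop :=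
  (∀ x, S.MemRel x c ↔ x ∈ A) ∧ ∀ c', (∀ x, S.MemRel x c' ↔ x ∈ A) → S.le c c'

/-- `A* = {⟨A ∩ I_{<a}⟩ | a ∈ M}`, the set of least codes of initial segments of `A`. -/
def star (A : Set M) : Set M :=
  {c | ∃ a, S.IsLeastCode (A ∩ {b | S.lt b a}) c}

end AStr

/-! ### Filters and partial orders of sets -/

/-- A filter on a partial order `P` of sets, ordered by inclusion: a proper, nonempty,
upward closed, downward directed subset of `P`. -/
def IsFilterOn {α : Type} (P F : Set (Set α)) : Prop :=
  F ⊆ P ∧ F.Nonempty ∧ F ≠ P ∧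
  (∀ A ∈ F, ∀ B ∈ P, A ⊆ B → B ∈ F) ∧
  (∀ A ∈ F, ∀ B ∈ F, ∃ C ∈ F, C ⊆ A ∧ C ⊆ B)

/-- An ultrafilter on a partial order of sets: a maximal filter. -/
def IsUltraOn {α : Type} (P U : Set (Set α)) : Prop :=
  IsFilterOn P U ∧ ∀ F, IsFilterOn P F → U ⊆ F → F = U

/-- A principal filter on a partial order of sets. -/
def IsPrincipalOn {α : Type} (P U : Set (Set α)) : Prop :=
  ∃ A ∈ P, U = {B | B ∈ P ∧ A ⊆ B}

/-- The countable chain condition for a partial order `P` of sets (ordered by `⊆`):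
every uncountable subset contains two distinct compatible elements. -/
def CCCOn {α : Type} (P : Set (Set α)) : Prop :=
  ∀ A : Set (Set α), A ⊆ P → ¬A.Countable →
    ∃ X ∈ A, ∃ Y ∈ A, X ≠ Y ∧ ∃ Z ∈ P, Z ⊆ X ∧ Z ⊆ Y

/-- `𝔛` is a Boolean algebra of sets. -/
def IsBoolAlg {α : Type} (𝔛 : Set (Set α)) : Prop :=
  Set.univ ∈ 𝔛 ∧ ∅ ∈ 𝔛 ∧
  (∀ A ∈ 𝔛, ∀ B ∈ 𝔛, A ∪ B ∈ 𝔛) ∧ (∀ A ∈ 𝔛, ∀ B ∈ 𝔛, A ∩ B ∈ 𝔛) ∧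
  (∀ A ∈ 𝔛, Aᶜ ∈ 𝔛)

/-- A filter on the Boolean algebra `𝔛`. -/
def IsBAFilter {α : Type} (𝔛 F : Set (Set α)) : Prop :=
  F ⊆ 𝔛 ∧ F.Nonempty ∧ ∅ ∉ F ∧
  (∀ A ∈ F, ∀ B ∈ 𝔛, A ⊆ B → B ∈ F) ∧
  (∀ A ∈ F, ∀ B ∈ F, A ∩ B ∈ F)

/-- An ultrafilter on the Boolean algebra `𝔛`: a maximal filter. -/
def IsBAUltra {α : Type} (𝔛 F : Set (Set α)) : Prop :=
  IsBAFilter 𝔛 F ∧ ∀ G, IsBAFilter 𝔛 G → F ⊆ G → G = F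

/-! ### Scott sets -/

/-- Oracle partial recursive functions: partial recursive in the oracle `O`. -/
inductive RecursiveIn (O : ℕ →. ℕ) : (ℕ →. ℕ) → Prop
  | oracle : RecursiveIn O O
  | zero : RecursiveIn O (pure 0)
  | succ : RecursiveIn O Nat.succ
  | left : RecursiveIn O ↑fun n : ℕ => n.unpair.1
  | right : RecursiveIn O ↑fun n : ℕ => n.unpair.2
  | pair {f g} : RecursiveIn O f → RecursiveIn O g →
      RecursiveIn O fun n => Nat.pair <$> f n <*> g n
  | comp {f g} : RecursiveIn O f → RecursiveIn O g →
      RecursiveIn O fun n => g n >>= f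
  | prec {f g} : RecursiveIn O f → RecursiveIn O g →
      RecursiveIn O (Nat.unpaired fun a n =>
        n.rec (f a) fun y IH => do let i ← IH; g (Nat.pair a (Nat.pair y i)))
  | rfind {f} : RecursiveIn O f →
      RecursiveIn O fun a => Nat.rfind fun n => (fun m => m = 0) <$> f (Nat.pair a n)

/-- The characteristic function of a set of natural numbers. -/
noncomputable def chi (A : Set ℕ) : ℕ →. ℕ :=
  fun n => Part.some (@ite _ (n ∈ A) (Classical.propDecidable _) 1 0)

/-- Turing reducibility: `B ≤_T A`. -/
def TuringLe (B A : Set ℕ) : Prop := RecursiveIn (chi A) (chi B)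

/-- A set of naturals coding a binary tree (codes of finite binary strings,
closed under initial segments). -/
def IsTreeCode (T : Set ℕ) : Prop :=
  (∀ n ∈ T, ∃ l : List Bool, Encodable.encode l = n) ∧
  (∀ l₁ l₂ : List Bool, l₁ <+: l₂ → Encodable.encode l₂ ∈ T → Encodable.encode l₁ ∈ T)

/-- `B` (as the characteristic function of a branch) is an infinite branch of the
binary tree coded by `T`. -/
def IsBranchThrough (B T : Set ℕ) : Prop :=
  ∀ n : ℕ, ∃ l : List Bool, l.length = n ∧
    (∀ i : Fin l.length, (l.get i = true ↔ (i : ℕ) ∈ B)) ∧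
    Encodable.encode l ∈ T

/-- A Scott set: a nonempty Boolean algebra of subsets of `ω` closed under relative
recursion and containing an infinite branch of every infinite binary tree coded in it. -/
def IsScottSet (𝔛 : Set (Set ℕ)) : Prop :=
  𝔛.Nonempty ∧
  (∀ A ∈ 𝔛, ∀ B ∈ 𝔛, A ∪ B ∈ 𝔛) ∧
  (∀ A ∈ 𝔛, Aᶜ ∈ 𝔛) ∧
  (∀ A ∈ 𝔛, ∀ B : Set ℕ, TuringLe B A → B ∈ 𝔛) ∧
  (∀ T ∈ 𝔛, IsTreeCode T → T.Infinite → ∃ B ∈ 𝔛, IsBranchThrough B T)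

/-- The sets represented in the theory `T`. -/
def repSet (T : Set Fml) : Set (Set ℕ) :=
  {A | ∃ φ : Fml, Fml.IsFO φ ∧ φ.freeN ⊆ {0} ∧
    ∀ n : ℕ, (n ∈ A → Proves T (φ.substN 0 (numeral n))) ∧
      (n ∉ A → Proves T (Fml.not (φ.substN 0 (numeral n))))}

/-- Martin's axiom. -/
def MartinsAxiom : Prop :=
  ∀ (P : Type) (_ : PartialOrder P),
    (∀ A : Set P, ¬A.Countable → ∃ x ∈ A, ∃ y ∈ A, x ≠ y ∧ ∃ z, z ≤ x ∧ z ≤ y) →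
    ∀ 𝒟 : Set (Set P), (∀ D ∈ 𝒟, ∀ x : P, ∃ y ∈ D, y ≤ x) →
      Cardinal.mk 𝒟 < Cardinal.continuum →
      ∃ F : Set P, F.Nonempty ∧ (∀ x ∈ F, ∀ y, x ≤ y → y ∈ F) ∧
        (∀ x ∈ F, ∀ y ∈ F, ∃ z ∈ F, z ≤ x ∧ z ≤ y) ∧
        ∀ D ∈ 𝒟, (F ∩ D).Nonempty

/-! ### Auxiliary machinery for Statement 7 -/

section Aux

lemma sat_not {M : Type} (S : AStr M) (𝔛 v w) (φ : Fml) :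
    Sat S 𝔛 v w (.not φ) ↔ ¬ Sat S 𝔛 v w φ := Iff.rfl

lemma sat_imp {M : Type} (S : AStr M) (𝔛 v w) (φ ψ : Fml) :
    Sat S 𝔛 v w (.imp φ ψ) ↔ (Sat S 𝔛 v w φ → Sat S 𝔛 v w ψ) := Iff.rfl

lemma sat_and {M : Type} (S : AStr M) (𝔛 v w) (φ ψ : Fml) :
    Sat S 𝔛 v w (φ.and ψ) ↔ Sat S 𝔛 v w φ ∧ Sat S 𝔛 v w ψ := by
  simp only [Fml.and, sat_not, sat_imp]; tauto

lemma sat_or {M : Type} (S : AStr M) (𝔛 v w) (φ ψ : Fml) :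
    Sat S 𝔛 v w (φ.or ψ) ↔ Sat S 𝔛 v w φ ∨ Sat S 𝔛 v w ψ := by
  simp only [Fml.or, sat_not, sat_imp]; tauto

lemma sat_all {M : Type} (S : AStr M) (𝔛 v w) (x : ℕ) (φ : Fml) :
    Sat S 𝔛 v w (.all x φ) ↔ ∀ a, Sat S 𝔛 (Function.update v x a) w φ := Iff.rfl

lemma sat_ex {M : Type} (S : AStr M) (𝔛 v w) (x : ℕ) (φ : Fml) :
    Sat S 𝔛 v w (Fml.ex x φ) ↔ ∃ a, Sat S 𝔛 (Function.update v x a) w φ := by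
  simp only [Fml.ex, sat_not, sat_all]; push_neg; rfl

lemma sat_eq {M : Type} (S : AStr M) (𝔛 v w) (t u : PTerm) :
    Sat S 𝔛 v w (.eq t u) ↔ t.val S v = u.val S v := Iff.rfl

lemma sat_lt {M : Type} (S : AStr M) (𝔛 v w) (t u : PTerm) :
    Sat S 𝔛 v w (.lt t u) ↔ S.lt (t.val S v) (u.val S v) := Iff.rfl

lemma sat_mem {M : Type} (S : AStr M) (𝔛 v w) (t : PTerm) (k : ℕ) :
    Sat S 𝔛 v w (.mem t k) ↔ t.val S v ∈ w k := Iff.rfl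

lemma val_congr {M : Type} (S : AStr M) {v v' : ℕ → M} :
    ∀ t : PTerm, (∀ k ∈ t.vars, v k = v' k) → t.val S v = t.val S v' := by
  intro t
  induction t with
  | var n => intro h; exact h n (by simp [PTerm.vars])
  | zero => intro _; rfl
  | one => intro _; rfl
  | add t u iht ihu =>
      intro h
      simp only [PTerm.val]
      rw [iht fun k hk => h k (by simp [PTerm.vars, hk]),
        ihu fun k hk => h k (by simp [PTerm.vars, hk])]
  | mul t u iht ihu =>
      intro h
      simp only [PTerm.val]
      rw [iht fun k hk => h k (by simp [PTerm.vars, hk]),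
        ihu fun k hk => h k (by simp [PTerm.vars, hk])]

lemma val_update {M : Type} (S : AStr M) {v : ℕ → M} {x : ℕ} {a : M} {t : PTerm}
    (h : x ∉ t.vars) : t.val S (Function.update v x a) = t.val S v := by
  apply val_congr
  intro k hk
  have : k ≠ x := fun e => h (e ▸ hk)
  simp [Function.update_apply, this]

lemma val_numeral {M : Type} (S : AStr M) (v : ℕ → M) : ∀ n : ℕ, (numeral n).val S v = S.num n := by
  intro n
  induction n with
  | zero => rfl
  | succ n ih => simp [numeral, PTerm.val, AStr.num, ih]

lemma vars_numeral : ∀ n : ℕ, (numeral n).vars = ∅ := by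
  intro n; induction n with
  | zero => rfl
  | succ n ih => simp [numeral, PTerm.vars, ih]

/-- First-order satisfaction only depends on the values of the free variables
(and not on `𝔛`, `w`). -/
lemma sat_fo_congr {M : Type} {S : AStr M} {𝔛 𝔛' : Set (Set M)} {w w' : ℕ → Set M} :
    ∀ (φ : Fml) {v v' : ℕ → M}, φ.IsFO → (∀ k ∈ φ.freeN, v k = v' k) →
      (Sat S 𝔛 v w φ ↔ Sat S 𝔛' v' w' φ) := by
  intro φ
  induction φ with
  | eq t u =>
      intro v v' _ hv
      simp only [sat_eq]
      rw [val_congr S t fun k hk => hv k (by simp [Fml.freeN, hk]),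
        val_congr S u fun k hk => hv k (by simp [Fml.freeN, hk])]
  | lt t u =>
      intro v v' _ hv
      simp only [sat_lt]
      rw [val_congr S t fun k hk => hv k (by simp [Fml.freeN, hk]),
        val_congr S u fun k hk => hv k (by simp [Fml.freeN, hk])]
  | mem t k => intro _ _ h; exact absurd h (by simp [Fml.IsFO])
  | not φ ih => intro v v' h hv; simp only [sat_not]; rw [ih h hv]
  | imp φ ψ ihφ ihψ =>
      intro v v' h hv
      simp only [sat_imp]
      rw [ihφ h.1 fun k hk => hv k (by simp [Fml.freeN, hk]),
        ihψ h.2 fun k hk => hv k (by simp [Fml.freeN, hk])]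
  | all x φ ih =>
      intro v v' h hv
      simp only [sat_all]
      refine forall_congr' fun a => ih h fun k hk => ?_
      rcases eq_or_ne k x with rfl | hne
      · simp [Function.update_apply]
      · simp only [Function.update_apply, if_neg hne]
        exact hv k (by simp [Fml.freeN, Finset.mem_erase, hne, hk])
  | allS k φ ih => intro _ _ h; exact absurd h (by simp [Fml.IsFO])

lemma satFO_congr {M : Type} {S : AStr M} (φ : Fml) {v v' : ℕ → M} (h : φ.IsFO)
    (hv : ∀ k ∈ φ.freeN, v k = v' k) : SatFO S v φ ↔ SatFO S v' φ :=
  sat_fo_congr φ h hv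

end Aux

section PAm

variable {M : Type} {S : AStr M}

lemma pm_addA (h : PAminusSem S) : ∀ a b c : M, S.add a (S.add b c) = S.add (S.add a b) c := h.1
lemma pm_addC (h : PAminusSem S) : ∀ a b : M, S.add a b = S.add b a := h.2.1
lemma pm_mulC (h : PAminusSem S) : ∀ a b : M, S.mul a b = S.mul b a := h.2.2.2.1
lemma pm_distL (h : PAminusSem S) : ∀ a b c : M, S.mul a (S.add b c) = S.add (S.mul a b) (S.mul a c) := h.2.2.2.2.1
lemma pm_addZ (h : PAminusSem S) : ∀ a : M, S.add a S.zero = a := h.2.2.2.2.2.1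
lemma pm_mulZ (h : PAminusSem S) : ∀ a : M, S.mul a S.zero = S.zero := h.2.2.2.2.2.2.1
lemma pm_mulO (h : PAminusSem S) : ∀ a : M, S.mul a S.one = a := h.2.2.2.2.2.2.2.1
lemma pm_ltT (h : PAminusSem S) : ∀ a b c : M, S.lt a b → S.lt b c → S.lt a c := h.2.2.2.2.2.2.2.2.1
lemma pm_ltIr (h : PAminusSem S) : ∀ a : M, ¬ S.lt a a := h.2.2.2.2.2.2.2.2.2.1
lemma pm_tri (h : PAminusSem S) : ∀ a b : M, S.lt a b ∨ a = b ∨ S.lt b a := h.2.2.2.2.2.2.2.2.2.2.1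
lemma pm_addLt (h : PAminusSem S) : ∀ a b c : M, S.lt a b → S.lt (S.add a c) (S.add b c) := h.2.2.2.2.2.2.2.2.2.2.2.1
lemma pm_mulLt (h : PAminusSem S) : ∀ a b c : M, S.lt S.zero c → S.lt a b → S.lt (S.mul a c) (S.mul b c) := h.2.2.2.2.2.2.2.2.2.2.2.2.1
lemma pm_ltEx (h : PAminusSem S) : ∀ a b : M, S.lt a b → ∃ c : M, S.add a c = b := h.2.2.2.2.2.2.2.2.2.2.2.2.2.1
lemma pm_zo (h : PAminusSem S) : S.lt S.zero S.one := h.2.2.2.2.2.2.2.2.2.2.2.2.2.2.1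
lemma pm_disc (h : PAminusSem S) : ∀ a : M, S.lt S.zero a → a = S.one ∨ S.lt S.one a := h.2.2.2.2.2.2.2.2.2.2.2.2.2.2.2.1
lemma pm_zp (h : PAminusSem S) : ∀ a : M, a = S.zero ∨ S.lt S.zero a := h.2.2.2.2.2.2.2.2.2.2.2.2.2.2.2.2

lemma pm_zeroAdd (h : PAminusSem S) (a : M) : S.add S.zero a = a := by
  rw [pm_addC h]; exact pm_addZ h a

lemma pm_distR (h : PAminusSem S) (a b c : M) :
    S.mul (S.add a b) c = S.add (S.mul a c) (S.mul b c) := by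
  rw [pm_mulC h, pm_distL h, pm_mulC h c a, pm_mulC h c b]

lemma pm_lt_add_pos (h : PAminusSem S) {a c : M} (hc : S.lt S.zero c) :
    S.lt a (S.add a c) := by
  have := pm_addLt h S.zero c a hc
  rwa [pm_zeroAdd h, pm_addC h] at this

lemma pm_lt_succ (h : PAminusSem S) (a : M) : S.lt a (S.add a S.one) :=
  pm_lt_add_pos h (pm_zo h)

lemma pm_asymm (h : PAminusSem S) {a b : M} (hab : S.lt a b) : ¬ S.lt b a :=
  fun hba => pm_ltIr h a (pm_ltT h _ _ _ hab hba)

lemma pm_add_cancel (h : PAminusSem S) {a b c : M} (e : S.add a c = S.add b c) : a = b := by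
  rcases pm_tri h a b with hl | he | hg
  · exact absurd e (fun e => pm_ltIr h _ (e ▸ pm_addLt h a b c hl))
  · exact he
  · exact absurd e.symm (fun e => pm_ltIr h _ (e ▸ pm_addLt h b a c hg))

lemma pm_lt_add_cancel (h : PAminusSem S) {a b c : M}
    (e : S.lt (S.add a c) (S.add b c)) : S.lt a b := by
  rcases pm_tri h a b with hl | he | hg
  · exact hl
  · subst he; exact absurd e (pm_ltIr h _)
  · exact absurd e (pm_asymm h (pm_addLt h b a c hg))

lemma pm_le_refl (S : AStr M) (a : M) : S.le a a := Or.inr rfl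

lemma pm_le_trans (h : PAminusSem S) {a b c : M} (h1 : S.le a b) (h2 : S.le b c) : S.le a c := by
  rcases h1 with h1 | rfl
  · rcases h2 with h2 | rfl
    · exact Or.inl (pm_ltT h _ _ _ h1 h2)
    · exact Or.inl h1
  · exact h2

lemma pm_lt_of_le_of_lt (h : PAminusSem S) {a b c : M} (h1 : S.le a b) (h2 : S.lt b c) :
    S.lt a c := by
  rcases h1 with h1 | rfl
  · exact pm_ltT h _ _ _ h1 h2
  · exact h2

lemma pm_lt_of_lt_of_le (h : PAminusSem S) {a b c : M} (h1 : S.lt a b) (h2 : S.le b c) :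
    S.lt a c := by
  rcases h2 with h2 | rfl
  · exact pm_ltT h _ _ _ h1 h2
  · exact h1

lemma pm_le_antisymm (h : PAminusSem S) {a b : M} (h1 : S.le a b) (h2 : S.le b a) : a = b := by
  rcases h1 with h1 | rfl
  · rcases h2 with h2 | rfl
    · exact absurd h2 (pm_asymm h h1)
    · rfl
  · rfl

lemma pm_zero_le (h : PAminusSem S) (a : M) : S.le S.zero a := by
  rcases pm_zp h a with rfl | ha
  · exact Or.inr rfl
  · exact Or.inl ha

lemma pm_le_add (h : PAminusSem S) (a c : M) : S.le a (S.add a c) := by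
  rcases pm_zp h c with rfl | hc
  · exact Or.inr (pm_addZ h a).symm
  · exact Or.inl (pm_lt_add_pos h hc)

lemma pm_succ_le (h : PAminusSem S) {a b : M} (hab : S.lt a b) :
    S.le (S.add a S.one) b := by
  obtain ⟨c, hc⟩ := pm_ltEx h a b hab
  rcases pm_zp h c with rfl | hc0
  · exact absurd ((pm_addZ h a ▸ hc) ▸ hab) (pm_ltIr h _)
  · have : ∃ d, c = S.add S.one d := by
      rcases pm_disc h c hc0 with rfl | h1c
      · exact ⟨S.zero, (pm_addZ h _).symm⟩
      · obtain ⟨d, hd⟩ := pm_ltEx h S.one c h1c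
        exact ⟨d, hd.symm⟩
    obtain ⟨d, rfl⟩ := this
    rw [pm_addA h] at hc
    exact hc ▸ pm_le_add h _ _

lemma pm_lt_of_succ_le (h : PAminusSem S) {a b : M} (hab : S.le (S.add a S.one) b) :
    S.lt a b :=
  pm_lt_of_lt_of_le h (pm_lt_succ h a) hab

lemma pm_succ_ne_zero (h : PAminusSem S) (a : M) : S.add a S.one ≠ S.zero := by
  intro e
  have : S.lt S.zero (S.add a S.one) :=
    pm_lt_of_le_of_lt h (pm_zero_le h a) (pm_lt_succ h a)
  exact pm_ltIr h _ (e ▸ this)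

lemma pm_mul2 (h : PAminusSem S) (a : M) : S.mul S.two a = S.add a a := by
  show S.mul (S.add S.one S.one) a = S.add a a
  rw [pm_mulC h, pm_distL h, pm_mulO h]

lemma pm_two_pos (h : PAminusSem S) : S.lt S.zero S.two :=
  pm_ltT h _ _ _ (pm_zo h) (pm_lt_succ h S.one)

lemma pm_mul2_cancel (h : PAminusSem S) {a b : M}
    (e : S.mul S.two a = S.mul S.two b) : a = b := by
  rw [pm_mul2 h, pm_mul2 h] at e
  rcases pm_tri h a b with hl | he | hg
  · have h1 := pm_addLt h a b a hl
    have h2 := pm_addLt h a b b hl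
    rw [pm_addC h a b] at h2
    have := pm_ltT h _ _ _ h1 h2
    exact absurd e (fun e => pm_ltIr h _ (e ▸ this))
  · exact he
  · have h1 := pm_addLt h b a b hg
    have h2 := pm_addLt h b a a hg
    rw [pm_addC h b a] at h2
    have := pm_ltT h _ _ _ h1 h2
    exact absurd e.symm (fun e => pm_ltIr h _ (e ▸ this))

lemma pm_add_le_right (h : PAminusSem S) {a b : M} (c : M) (hab : S.le a b) :
    S.le (S.add a c) (S.add b c) := by
  rcases hab with hab | rfl
  · exact Or.inl (pm_addLt h a b c hab)
  · exact Or.inr rfl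

lemma pm_add_le_left (h : PAminusSem S) {a b : M} (c : M) (hab : S.le a b) :
    S.le (S.add c a) (S.add c b) := by
  rw [pm_addC h c a, pm_addC h c b]; exact pm_add_le_right h c hab

lemma pm_mul_le_right (h : PAminusSem S) {a b : M} (c : M) (hab : S.le a b) :
    S.le (S.mul a c) (S.mul b c) := by
  rcases hab with hab | rfl
  · rcases pm_zp h c with rfl | hc
    · rw [pm_mulZ h, pm_mulZ h]; exact pm_le_refl S _
    · exact Or.inl (pm_mulLt h a b c hc hab)
  · exact Or.inr rfl

lemma pm_mul_le_left (h : PAminusSem S) {a b : M} (c : M) (hab : S.le a b) :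
    S.le (S.mul c a) (S.mul c b) := by
  rw [pm_mulC h c a, pm_mulC h c b]; exact pm_mul_le_right h c hab

end PAm
section PAm2
variable {M : Type} {S : AStr M}

lemma pm_add_lt_left (h : PAminusSem S) {b c : M} (a : M) (hbc : S.lt b c) :
    S.lt (S.add a b) (S.add a c) := by
  rw [pm_addC h a b, pm_addC h a c]; exact pm_addLt h b c a hbc

lemma pm_add_cancel_left (h : PAminusSem S) {a x y : M}
    (e : S.add a x = S.add a y) : x = y := by
  rw [pm_addC h a x, pm_addC h a y] at e; exact pm_add_cancel h e

lemma pm_mul_one_left (h : PAminusSem S) (a : M) : S.mul S.one a = a := by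
  rw [pm_mulC h]; exact pm_mulO h a

end PAm2

section Compr

variable {M : Type} {S : AStr M} {𝔛 : Set (Set M)}

lemma compl_mem (hACA : SatACA0 S 𝔛) {A : Set M} (hA : A ∈ 𝔛) : Aᶜ ∈ 𝔛 := by
  have := hACA.2.2 (.not (.mem (.var 0) 0)) 0 (by simp [Fml.IsArith])
    (fun _ => S.zero) (fun _ => A) (fun _ => hA)
  convert this using 1
  all_goals ext a; simp [Sat, PTerm.val]

lemma inter_mem (hACA : SatACA0 S 𝔛) {A B : Set M} (hA : A ∈ 𝔛) (hB : B ∈ 𝔛) :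
    A ∩ B ∈ 𝔛 := by
  have := hACA.2.2 ((Fml.mem (.var 0) 0).and (.mem (.var 0) 1)) 0
    (by simp [Fml.IsArith, Fml.and])
    (fun _ => S.zero) (fun k => if k = 0 then A else B)
    (fun k => by by_cases h : k = 0 <;> simp [h, hA, hB])
  convert this using 1
  all_goals ext a; simp [sat_and, Sat, PTerm.val]

/-- The set of even numbers of `M` is in `𝔛`. -/
lemma evens_mem (hACA : SatACA0 S 𝔛) {X0 : Set M} (hX0 : X0 ∈ 𝔛) :
    {a : M | ∃ b, S.add b b = a} ∈ 𝔛 := by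
  have := hACA.2.2 (Fml.ex 1 (.eq (.add (.var 1) (.var 1)) (.var 0))) 0
    (by simp [Fml.IsArith, Fml.ex]) (fun _ => S.zero) (fun _ => X0) (fun _ => hX0)
  convert this using 1
  all_goals ext a; simp [Fml.ex, Sat, PTerm.val, Function.update_apply]

/-- Parity in `M` : every element is even or odd, but not both. -/
lemma pm_parity (hACA : SatACA0 S 𝔛) {X0 : Set M} (hX0 : X0 ∈ 𝔛) (a : M) :
    ((∃ b, S.add b b = a) ∧ ¬ (∃ b, S.add (S.add b b) S.one = a)) ∨
      ((∃ b, S.add (S.add b b) S.one = a) ∧ ¬ (∃ b, S.add b b = a)) := by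
  have h : PAminusSem S := hACA.1
  have hpred : ∀ c : M, S.lt S.zero c → ∃ d, c = S.add d S.one := by
    intro c hc
    rcases pm_disc h c hc with rfl | h1c
    · exact ⟨S.zero, (pm_zeroAdd h S.one).symm⟩
    · obtain ⟨d, hd⟩ := pm_ltEx h S.one c h1c
      exact ⟨d, by rw [← hd, pm_addC h]⟩
  have hkey : ∀ d : M, S.add (S.add d S.one) (S.add d S.one) =
      S.add (S.add (S.add d d) S.one) S.one := by
    intro d
    rw [pm_addA h, pm_addC h (S.add d S.one) d, pm_addA h]
  -- the inductive set
  set Zf : Fml := Fml.ex 1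
    (((Fml.eq (.add (.var 1) (.var 1)) (.var 0)).and
        (.not (Fml.ex 2 (.eq (.add (.add (.var 2) (.var 2)) .one) (.var 0))))).or
      ((Fml.eq (.add (.add (.var 1) (.var 1)) .one) (.var 0)).and
        (.not (Fml.ex 2 (.eq (.add (.var 2) (.var 2)) (.var 0)))))) with hZf
  have hZar : Zf.IsArith := by simp [hZf, Fml.IsArith, Fml.ex, Fml.and, Fml.or]
  have hZ : {a : M | Sat S 𝔛 (Function.update (fun _ => S.zero) 0 a) (fun _ => X0) Zf} ∈ 𝔛 :=
    hACA.2.2 Zf 0 hZar _ _ (fun _ => hX0)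
  have hmean : ∀ a : M, (a ∈ {a : M | Sat S 𝔛 (Function.update (fun _ => S.zero) 0 a)
      (fun _ => X0) Zf}) ↔
      (∃ b, (S.add b b = a ∧ ¬ ∃ c, S.add (S.add c c) S.one = a) ∨
        (S.add (S.add b b) S.one = a ∧ ¬ ∃ c, S.add c c = a)) := by
    intro a
    simp only [hZf, Set.mem_setOf_eq, sat_ex, sat_or, sat_and, sat_not, sat_eq, PTerm.val]
    simp [Function.update_apply]
  have h0 : S.zero ∈ {a : M | Sat S 𝔛 (Function.update (fun _ => S.zero) 0 a)
      (fun _ => X0) Zf} := by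
    rw [hmean]
    refine ⟨S.zero, Or.inl ⟨pm_addZ h S.zero, ?_⟩⟩
    rintro ⟨c, hc⟩
    exact pm_succ_ne_zero h _ hc
  have hstep : ∀ a ∈ {a : M | Sat S 𝔛 (Function.update (fun _ => S.zero) 0 a)
      (fun _ => X0) Zf}, S.add a S.one ∈ {a : M | Sat S 𝔛
      (Function.update (fun _ => S.zero) 0 a) (fun _ => X0) Zf} := by
    intro a ha
    rw [hmean] at ha ⊢
    obtain ⟨b, ⟨hb, hno⟩ | ⟨hb, hne⟩⟩ := ha
    · refine ⟨b, Or.inr ⟨by rw [hb], ?_⟩⟩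
      rintro ⟨c, hc⟩
      rcases pm_zp h c with rfl | hc0
      · rw [pm_addZ h] at hc
        exact pm_succ_ne_zero h a hc.symm
      · obtain ⟨d, rfl⟩ := hpred c hc0
        rw [hkey d] at hc
        exact hno ⟨d, pm_add_cancel h hc⟩
    · refine ⟨S.add b S.one, Or.inl ⟨?_, ?_⟩⟩
      · rw [hkey b, hb]
      · rintro ⟨c, hc⟩
        exact hne ⟨c, pm_add_cancel h hc⟩
  have hall := hACA.2.1 _ hZ h0 hstep a
  rw [hmean] at hall
  obtain ⟨b, ⟨hb, hno⟩ | ⟨hb, hne⟩⟩ := hall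
  · exact Or.inl ⟨⟨b, hb⟩, hno⟩
  · exact Or.inr ⟨⟨b, hb⟩, hne⟩

/-- Existence of pairing codes in `M`. -/
lemma pair_exists (hACA : SatACA0 S 𝔛) {X0 : Set M} (hX0 : X0 ∈ 𝔛) (a b : M) :
    ∃ p, S.PairRel p a b := by
  have h : PAminusSem S := hACA.1
  have hkey : ∀ d : M, S.add (S.add d S.one) (S.add d S.one) =
      S.add (S.add (S.add d d) S.one) S.one := by
    intro d
    rw [pm_addA h, pm_addC h (S.add d S.one) d, pm_addA h]
  set s := S.add a b with hs
  have heven : ∃ w, S.add w w = S.mul s (S.add s S.one) := by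
    rcases pm_parity hACA hX0 s with ⟨⟨u, hu⟩, _⟩ | ⟨⟨u, hu⟩, _⟩
    · exact ⟨S.mul u (S.add s S.one), by rw [← pm_distR h, hu]⟩
    · refine ⟨S.mul s (S.add u S.one), ?_⟩
      rw [← pm_distL h]
      congr 1
      rw [hkey u, hu]
  obtain ⟨w, hw⟩ := heven
  refine ⟨S.add w a, ?_⟩
  show S.mul S.two (S.add w a) = _
  rw [pm_mul2 h, ← hs, pm_mul2 h]
  calc S.add (S.add w a) (S.add w a)
      = S.add (S.add (S.add w a) w) a := pm_addA h _ _ _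
    _ = S.add (S.add w (S.add a w)) a := by rw [pm_addA h w a w]
    _ = S.add (S.add w (S.add w a)) a := by rw [pm_addC h a w]
    _ = S.add (S.add (S.add w w) a) a := by rw [pm_addA h]
    _ = S.add (S.add w w) (S.add a a) := (pm_addA h _ _ _).symm
    _ = S.add (S.mul s (S.add s S.one)) (S.add a a) := by rw [hw]

/-- Injectivity of the pairing relation. -/
lemma pair_inj (h : PAminusSem S) {p a b c d : M}
    (h1 : S.PairRel p a b) (h2 : S.PairRel p c d) : a = c ∧ b = d := by
  have hkey : ∀ e : M, S.add (S.add e S.one) (S.add e S.one) =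
      S.add (S.add (S.add e e) S.one) S.one := by
    intro e
    rw [pm_addA h, pm_addC h (S.add e S.one) e, pm_addA h]
  have key : ∀ x y u v : M, S.lt (S.add x y) (S.add u v) →
      S.lt (S.add (S.mul (S.add x y) (S.add (S.add x y) S.one)) (S.mul S.two x))
        (S.add (S.mul (S.add u v) (S.add (S.add u v) S.one)) (S.mul S.two u)) := by
    intro x y u v hlt
    set s := S.add x y with hs
    set s' := S.add u v with hs'
    have hident : S.mul (S.add s S.one) (S.add (S.add s S.one) S.one) =
        S.add (S.mul s (S.add s S.one)) (S.add (S.add s s) S.two) := by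
      calc S.mul (S.add s S.one) (S.add (S.add s S.one) S.one)
          = S.add (S.mul (S.add s S.one) (S.add s S.one)) (S.mul (S.add s S.one) S.one) :=
            pm_distL h _ _ _
        _ = S.add (S.mul (S.add s S.one) (S.add s S.one)) (S.add s S.one) := by
            rw [pm_mulO h]
        _ = S.add (S.add (S.mul s (S.add s S.one)) (S.mul S.one (S.add s S.one)))
            (S.add s S.one) := by rw [pm_distR h]
        _ = S.add (S.add (S.mul s (S.add s S.one)) (S.add s S.one)) (S.add s S.one) := by
            rw [pm_mul_one_left h]
        _ = S.add (S.mul s (S.add s S.one)) (S.add (S.add s S.one) (S.add s S.one)) :=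
            (pm_addA h _ _ _).symm
        _ = S.add (S.mul s (S.add s S.one)) (S.add (S.add (S.add s s) S.one) S.one) := by
            rw [hkey s]
        _ = S.add (S.mul s (S.add s S.one)) (S.add (S.add s s) (S.add S.one S.one)) := by
            rw [pm_addA h (S.add s s) S.one S.one]
        _ = S.add (S.mul s (S.add s S.one)) (S.add (S.add s s) S.two) := rfl
    have h2x : S.le (S.mul S.two x) (S.add s s) := by
      rw [pm_mul2 h]
      have hxs : S.le x s := pm_le_add h x y
      exact pm_le_trans h (pm_add_le_right h x hxs) (pm_add_le_left h s hxs)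
    have hstep : S.lt (S.add (S.mul s (S.add s S.one)) (S.mul S.two x))
        (S.mul (S.add s S.one) (S.add (S.add s S.one) S.one)) := by
      rw [hident]
      refine pm_lt_of_le_of_lt h (pm_add_le_left h _ h2x) ?_
      exact pm_add_lt_left h _ (pm_lt_add_pos h (pm_two_pos h))
    have hmono : S.le (S.mul (S.add s S.one) (S.add (S.add s S.one) S.one))
        (S.mul s' (S.add s' S.one)) := by
      have h1' : S.le (S.add s S.one) s' := pm_succ_le h hlt
      have h2' : S.le (S.add (S.add s S.one) S.one) (S.add s' S.one) :=
        pm_add_le_right h S.one h1'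
      exact pm_le_trans h (pm_mul_le_right h _ h1') (pm_mul_le_left h _ h2')
    refine pm_lt_of_lt_of_le h (pm_lt_of_lt_of_le h hstep hmono) ?_
    exact pm_le_add h _ _
  have e : S.add (S.mul (S.add a b) (S.add (S.add a b) S.one)) (S.mul S.two a) =
      S.add (S.mul (S.add c d) (S.add (S.add c d) S.one)) (S.mul S.two c) := by
    have e1 : S.mul S.two p = _ := h1
    have e2 : S.mul S.two p = _ := h2
    rw [← e1, e2]
  rcases pm_tri h (S.add a b) (S.add c d) with hl | heq | hg
  · exact absurd e (fun e => pm_ltIr h _ (e ▸ key a b c d hl))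
  · have e' := e
    rw [heq] at e'
    have h2ac : S.mul S.two a = S.mul S.two c := pm_add_cancel_left h e'
    have hac : a = c := pm_mul2_cancel h h2ac
    subst hac
    exact ⟨rfl, pm_add_cancel_left h heq⟩
  · exact absurd e.symm (fun e => pm_ltIr h _ (e ▸ key c d a b hg))

/-- The least number principle in `(M,𝔛)`. -/
lemma pm_lnp (hACA : SatACA0 S 𝔛) {X : Set M} (hX : X ∈ 𝔛) {a : M} (ha : a ∈ X) :
    ∃ m, m ∈ X ∧ ∀ y ∈ X, S.le m y := by
  have h : PAminusSem S := hACA.1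
  by_contra hno
  push_neg at hno
  set Yf : Fml := Fml.all 1 (.imp ((Fml.lt (.var 1) (.var 0)).or (.eq (.var 1) (.var 0)))
    (.not (.mem (.var 1) 0))) with hYf
  have hYar : Yf.IsArith := by simp [hYf, Fml.IsArith, Fml.or]
  have hY : {b : M | Sat S 𝔛 (Function.update (fun _ => S.zero) 0 b) (fun _ => X) Yf} ∈ 𝔛 :=
    hACA.2.2 Yf 0 hYar _ _ (fun _ => hX)
  have hmean : ∀ b : M, (b ∈ {b : M | Sat S 𝔛 (Function.update (fun _ => S.zero) 0 b)
      (fun _ => X) Yf}) ↔ ∀ y, S.le y b → y ∉ X := by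
    intro b
    simp only [hYf, Set.mem_setOf_eq, sat_all, sat_imp, sat_or, sat_not, sat_eq, sat_lt,
      sat_mem, PTerm.val, AStr.le]
    simp [Function.update_apply]
  have hleast : ∀ b ∈ X, ∃ y ∈ X, ¬ S.le b y := hno
  have h0 : S.zero ∈ {b : M | Sat S 𝔛 (Function.update (fun _ => S.zero) 0 b)
      (fun _ => X) Yf} := by
    rw [hmean]
    intro y hy hyX
    have hy0 : y = S.zero := pm_le_antisymm h hy (pm_zero_le h y)
    subst hy0
    obtain ⟨z, hzX, hz⟩ := hleast _ hyX
    exact hz (pm_zero_le h z)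
  have hstep : ∀ b ∈ {b : M | Sat S 𝔛 (Function.update (fun _ => S.zero) 0 b)
      (fun _ => X) Yf}, S.add b S.one ∈ {b : M | Sat S 𝔛
      (Function.update (fun _ => S.zero) 0 b) (fun _ => X) Yf} := by
    intro b hb
    rw [hmean] at hb ⊢
    intro y hy hyX
    have hbleast : ∀ z ∈ X, S.le y z := by
      intro z hzX
      rcases pm_tri h y z with hl | rfl | hg
      · exact Or.inl hl
      · exact pm_le_refl S _
      · -- z < y ≤ b+1, so z ≤ b, so z ∉ X, contradiction
        exfalso
        have hzb1 : S.lt z (S.add b S.one) := pm_lt_of_lt_of_le h hg hy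
        have hzb : S.le z b := by
          rcases pm_succ_le h hzb1 with hl | he
          · exact Or.inl (pm_lt_add_cancel h hl)
          · exact Or.inr (pm_add_cancel h he)
        exact hb z hzb hzX
    obtain ⟨z, hzX, hz⟩ := hleast y hyX
    exact hz (hbleast z hzX)
  have hall := hACA.2.1 _ hY h0 hstep a
  rw [hmean] at hall
  exact hall a (pm_le_refl S a) ha

lemma pm_least_unique (h : PAminusSem S) {X : Set M} {m m' : M}
    (h1 : m ∈ X ∧ ∀ y ∈ X, S.le m y) (h2 : m' ∈ X ∧ ∀ y ∈ X, S.le m' y) : m = m' :=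
  pm_le_antisymm h (h1.2 m' h2.1) (h2.2 m h1.1)

/-! ### Unboundedness -/

lemma pm_max (h : PAminusSem S) (b1 b2 : M) : ∃ b3, S.le b1 b3 ∧ S.le b2 b3 := by
  rcases pm_tri h b1 b2 with hl | rfl | hg
  · exact ⟨b2, Or.inl hl, pm_le_refl S _⟩
  · exact ⟨b1, pm_le_refl S _, pm_le_refl S _⟩
  · exact ⟨b1, pm_le_refl S _, Or.inl hg⟩

lemma unb_mono {A B : Set M} (hAB : A ⊆ B) (hA : S.Unb A) : S.Unb B := by
  intro b
  obtain ⟨a, haA, hab⟩ := hA b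
  exact ⟨a, hAB haA, hab⟩

lemma unb_univ (h : PAminusSem S) : S.Unb (Set.univ : Set M) := by
  intro b
  exact ⟨S.add b S.one, trivial, pm_lt_succ h b⟩

lemma not_unb_iff {A : Set M} : ¬ S.Unb A ↔ ∃ b, ∀ a ∈ A, ¬ S.lt b a := by
  unfold AStr.Unb
  push_neg
  rfl

lemma not_unb_empty (S : AStr M) : ¬ S.Unb (∅ : Set M) := by
  intro hu
  obtain ⟨a, ha, _⟩ := hu S.zero
  exact ha

lemma not_unb_union (h : PAminusSem S) {A B : Set M} (hA : ¬ S.Unb A) (hB : ¬ S.Unb B) :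
    ¬ S.Unb (A ∪ B) := by
  rw [not_unb_iff] at hA hB ⊢
  obtain ⟨b1, hb1⟩ := hA
  obtain ⟨b2, hb2⟩ := hB
  obtain ⟨b3, h13, h23⟩ := pm_max h b1 b2
  refine ⟨b3, fun a ha hlt => ?_⟩
  rcases ha with ha | ha
  · exact hb1 a ha (pm_lt_of_le_of_lt h h13 hlt)
  · exact hb2 a ha (pm_lt_of_le_of_lt h h23 hlt)

/-- If `C` is unbounded and `C ∩ D` is bounded, then `C ∩ Dᶜ` is unbounded. -/
lemma unb_diff (h : PAminusSem S) {C D : Set M} (hC : S.Unb C) (hCD : ¬ S.Unb (C ∩ D)) :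
    S.Unb (C ∩ Dᶜ) := by
  rw [not_unb_iff] at hCD
  obtain ⟨b, hb⟩ := hCD
  intro b'
  obtain ⟨b3, h13, h23⟩ := pm_max h b b'
  obtain ⟨a, haC, hab⟩ := hC b3
  refine ⟨a, ⟨haC, fun haD => ?_⟩, pm_lt_of_le_of_lt h h23 hab⟩
  exact hb a ⟨haC, haD⟩ (pm_lt_of_le_of_lt h h13 hab)

/-- The evens and the odds are unbounded. -/
lemma unb_evens (h : PAminusSem S) : S.Unb {a : M | ∃ b, S.add b b = a} := by
  intro b
  refine ⟨S.add (S.add b S.one) (S.add b S.one), ⟨S.add b S.one, rfl⟩, ?_⟩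
  exact pm_lt_of_lt_of_le h (pm_lt_succ h b) (pm_le_add h _ _)

lemma unb_odds (h : PAminusSem S) : S.Unb {a : M | ∃ b, S.add (S.add b b) S.one = a} := by
  intro b
  refine ⟨S.add (S.add b b) S.one, ⟨b, rfl⟩, ?_⟩
  exact pm_lt_of_le_of_lt h (pm_le_add h b b) (pm_lt_succ h _)

end Compr

section Ultra

variable {M : Type} {S : AStr M} {𝔛 : Set (Set M)} {U : Set (Set M)}

lemma not_unb_mono {A B : Set M} (hAB : A ⊆ B) (hB : ¬ S.Unb B) : ¬ S.Unb A :=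
  fun hA => hB (unb_mono hAB hA)

lemma u_memX (hU : IsUltraOn (S.PX 𝔛) U) {A : Set M} (hA : A ∈ U) : A ∈ 𝔛 :=
  (hU.1.1 hA).1

lemma u_unb (hU : IsUltraOn (S.PX 𝔛) U) {A : Set M} (hA : A ∈ U) : S.Unb A :=
  (hU.1.1 hA).2

lemma u_up (hU : IsUltraOn (S.PX 𝔛) U) {A B : Set M} (hA : A ∈ U) (hB : B ∈ 𝔛)
    (hAB : A ⊆ B) : B ∈ U :=
  hU.1.2.2.2.1 A hA B ⟨hB, unb_mono hAB (u_unb hU hA)⟩ hAB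

lemma u_inter (hACA : SatACA0 S 𝔛) (hU : IsUltraOn (S.PX 𝔛) U) {A B : Set M}
    (hA : A ∈ U) (hB : B ∈ U) : A ∩ B ∈ U := by
  obtain ⟨C, hC, hCA, hCB⟩ := hU.1.2.2.2.2 A hA B hB
  exact u_up hU hC (inter_mem hACA (u_memX hU hA) (u_memX hU hB))
    (Set.subset_inter hCA hCB)

lemma u_not_both (hACA : SatACA0 S 𝔛) (hU : IsUltraOn (S.PX 𝔛) U) {D : Set M}
    (h1 : D ∈ U) (h2 : Dᶜ ∈ U) : False := by
  have := u_unb hU (u_inter hACA hU h1 h2)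
  rw [Set.inter_compl_self] at this
  exact not_unb_empty S this

lemma u_decide_aux (hACA : SatACA0 S 𝔛) (hU : IsUltraOn (S.PX 𝔛) U) {D : Set M}
    (hD : D ∈ 𝔛) (hall : ∀ B ∈ U, S.Unb (B ∩ D)) : D ∈ U := by
  have h : PAminusSem S := hACA.1
  obtain ⟨B0, hB0⟩ := hU.1.2.1
  have hDunb : S.Unb D := unb_mono Set.inter_subset_right (hall B0 hB0)
  have hDPX : D ∈ S.PX 𝔛 := ⟨hD, hDunb⟩
  set F : Set (Set M) := {E | E ∈ S.PX 𝔛 ∧ ∃ B ∈ U, B ∩ D ⊆ E} with hF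
  have hUF : U ⊆ F := fun B hB => ⟨hU.1.1 hB, B, hB, Set.inter_subset_left⟩
  have hDF : D ∈ F := ⟨hDPX, B0, hB0, Set.inter_subset_right⟩
  have hFfil : IsFilterOn (S.PX 𝔛) F := by
    refine ⟨fun E hE => hE.1, ⟨D, hDF⟩, ?_, ?_, ?_⟩
    · -- F ≠ PX
      intro hFP
      set Ev : Set M := {a : M | ∃ b, S.add b b = a} with hEv
      have hEvX : Ev ∈ 𝔛 := evens_mem hACA hD
      have hEvPX : Ev ∈ S.PX 𝔛 := ⟨hEvX, unb_evens h⟩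
      have hEvCPX : Evᶜ ∈ S.PX 𝔛 := by
        refine ⟨compl_mem hACA hEvX, unb_mono ?_ (unb_odds h)⟩
        intro a ⟨b, hb⟩
        rcases pm_parity hACA hD a with ⟨_, hno⟩ | ⟨_, hne⟩
        · exact absurd ⟨b, hb⟩ hno
        · exact fun he => hne he
      have h1 : Ev ∈ F := hFP ▸ hEvPX
      have h2 : Evᶜ ∈ F := hFP ▸ hEvCPX
      obtain ⟨_, B1, hB1, hB1s⟩ := h1
      obtain ⟨_, B2, hB2, hB2s⟩ := h2
      obtain ⟨C, hC, hCA, hCB⟩ := hU.1.2.2.2.2 B1 hB1 B2 hB2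
      have : C ∩ D ⊆ Ev ∩ Evᶜ := fun a ha =>
        ⟨hB1s ⟨hCA ha.1, ha.2⟩, hB2s ⟨hCB ha.1, ha.2⟩⟩
      rw [Set.inter_compl_self, Set.subset_empty_iff] at this
      exact not_unb_empty S (this ▸ hall C hC)
    · -- upward closed
      rintro E ⟨_, B, hB, hBs⟩ E' hE' hEE'
      exact ⟨hE', B, hB, hBs.trans hEE'⟩
    · -- directed
      rintro E1 ⟨_, B1, hB1, hB1s⟩ E2 ⟨_, B2, hB2, hB2s⟩
      obtain ⟨C, hC, hCA, hCB⟩ := hU.1.2.2.2.2 B1 hB1 B2 hB2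
      refine ⟨C ∩ D, ⟨⟨inter_mem hACA (u_memX hU hC) hD, hall C hC⟩, C, hC,
        subset_refl _⟩, ?_, ?_⟩
      · exact fun a ha => hB1s ⟨hCA ha.1, ha.2⟩
      · exact fun a ha => hB2s ⟨hCB ha.1, ha.2⟩
  have := hU.2 F hFfil hUF
  exact this ▸ hDF

lemma u_decide (hACA : SatACA0 S 𝔛) (hU : IsUltraOn (S.PX 𝔛) U) {D : Set M}
    (hD : D ∈ 𝔛) : D ∈ U ∨ Dᶜ ∈ U := by
  have h : PAminusSem S := hACA.1
  by_cases hcase : ∀ B ∈ U, S.Unb (B ∩ D)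
  · exact Or.inl (u_decide_aux hACA hU hD hcase)
  · push_neg at hcase
    obtain ⟨B, hB, hBD⟩ := hcase
    refine Or.inr (u_decide_aux hACA hU (compl_mem hACA hD) ?_)
    intro B' hB'
    obtain ⟨C, hC, hCA, hCB⟩ := hU.1.2.2.2.2 B hB B' hB'
    have hCD : ¬ S.Unb (C ∩ D) :=
      not_unb_mono (B := B ∩ D) (fun a ha => ⟨hCA ha.1, ha.2⟩) hBD
    have := unb_diff h (u_unb hU hC) hCD
    exact unb_mono (fun a ha => ⟨hCB ha.1, ha.2⟩) this

lemma u_notMem_iff (hACA : SatACA0 S 𝔛) (hU : IsUltraOn (S.PX 𝔛) U) {D : Set M}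
    (hD : D ∈ 𝔛) : Dᶜ ∈ U ↔ D ∉ U := by
  constructor
  · exact fun h2 h1 => u_not_both hACA hU h1 h2
  · intro h1
    rcases u_decide hACA hU hD with h | h
    · exact absurd h h1
    · exact h

end Ultra

section Builders

/-- All variables of a term are below `B`. -/
def TBel (t : PTerm) (B : ℕ) : Prop := ∀ y ∈ t.vars, y < B

lemma TBel_var {y B : ℕ} (h : y < B) : TBel (.var y) B := by
  intro z hz; simp [PTerm.vars] at hz; omega

lemma TBel_zero {B : ℕ} : TBel .zero B := by intro z hz; simp [PTerm.vars] at hz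

lemma TBel_one {B : ℕ} : TBel .one B := by intro z hz; simp [PTerm.vars] at hz

lemma TBel_add {t u : PTerm} {B : ℕ} (ht : TBel t B) (hu : TBel u B) :
    TBel (.add t u) B := by
  intro z hz; simp [PTerm.vars] at hz; rcases hz with h | h
  exacts [ht z h, hu z h]

lemma TBel_mul {t u : PTerm} {B : ℕ} (ht : TBel t B) (hu : TBel u B) :
    TBel (.mul t u) B := by
  intro z hz; simp [PTerm.vars] at hz; rcases hz with h | h
  exacts [ht z h, hu z h]

lemma TBel_numeral {n B : ℕ} : TBel (numeral n) B := by
  intro z hz; rw [vars_numeral] at hz; simp at hz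

lemma TBel_mono {t : PTerm} {B B' : ℕ} (h : TBel t B) (hBB : B ≤ B') : TBel t B' :=
  fun y hy => lt_of_lt_of_le (h y hy) hBB

lemma val_upd {M : Type} (S : AStr M) {v : ℕ → M} {x B : ℕ} {a : M} {t : PTerm}
    (ht : TBel t B) (hx : B ≤ x) : t.val S (Function.update v x a) = t.val S v :=
  val_update S (fun hmem => absurd (ht x hmem) (by omega))

lemma mem_sliceAt {M : Type} {S : AStr M} {A : Set M} {a b : M} :
    b ∈ S.SliceAt A a ↔ ∃ p, S.PairRel p a b ∧ p ∈ A := Iff.rfl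

/-! #### IsArith closure lemmas -/

lemma isArith_and {φ ψ : Fml} (h1 : φ.IsArith) (h2 : ψ.IsArith) : (φ.and ψ).IsArith :=
  ⟨h1, h2⟩

lemma isArith_or {φ ψ : Fml} (h1 : φ.IsArith) (h2 : ψ.IsArith) : (φ.or ψ).IsArith :=
  ⟨h1, h2⟩

lemma isArith_ex {x : ℕ} {φ : Fml} (h : φ.IsArith) : (Fml.ex x φ).IsArith := h

lemma isArith_not {φ : Fml} (h : φ.IsArith) : φ.not.IsArith := h

lemma isArith_all {x : ℕ} {φ : Fml} (h : φ.IsArith) : (Fml.all x φ).IsArith := h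

lemma isArith_imp {φ ψ : Fml} (h1 : φ.IsArith) (h2 : ψ.IsArith) : (φ.imp ψ).IsArith :=
  ⟨h1, h2⟩

/-! #### The pairing formula -/

def pairF (p a b : PTerm) : Fml :=
  .eq (.mul (.add .one .one) p)
    (.add (.mul (.add a b) (.add (.add a b) .one)) (.mul (.add .one .one) a))

lemma isArith_pairF {p a b : PTerm} : (pairF p a b).IsArith := trivial

lemma sat_pairF {M : Type} (S : AStr M) (𝔛 v w) (p a b : PTerm) :
    Sat S 𝔛 v w (pairF p a b) ↔
      S.PairRel (p.val S v) (a.val S v) (b.val S v) := by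
  simp [pairF, sat_eq, PTerm.val, AStr.PairRel, AStr.two]

/-! #### The mod formula -/

def modF (a m r : PTerm) (B : ℕ) : Fml :=
  (Fml.lt r m).and (Fml.ex B (.eq a (.add (.mul (.var B) m) r)))

lemma isArith_modF {a m r : PTerm} {B : ℕ} : (modF a m r B).IsArith :=
  isArith_and trivial (isArith_ex trivial)

lemma sat_modF {M : Type} (S : AStr M) (𝔛 v w) {a m r : PTerm} {B : ℕ}
    (ha : TBel a B) (hm : TBel m B) (hr : TBel r B) :
    Sat S 𝔛 v w (modF a m r B) ↔
      S.ModRel (a.val S v) (m.val S v) (r.val S v) := by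
  unfold AStr.ModRel
  rw [modF, sat_and, sat_lt, sat_ex]
  refine and_congr Iff.rfl (exists_congr fun q => ?_)
  rw [sat_eq]
  simp only [PTerm.val]
  rw [val_upd S ha le_rfl, val_upd S hm le_rfl, val_upd S hr le_rfl,
    Function.update_self]

/-! #### The β-function formula -/

def betaF (c i x : PTerm) (B : ℕ) : Fml :=
  Fml.ex B (Fml.ex (B+1) ((pairF c (.var B) (.var (B+1))).and
    (modF (.var B) (.add .one (.mul (.add i .one) (.var (B+1)))) x (B+2))))

lemma isArith_betaF {c i x : PTerm} {B : ℕ} : (betaF c i x B).IsArith :=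
  isArith_ex (isArith_ex (isArith_and isArith_pairF isArith_modF))

lemma sat_betaF {M : Type} (S : AStr M) (𝔛 v w) {c i x : PTerm} {B : ℕ}
    (hc : TBel c B) (hi : TBel i B) (hx : TBel x B) :
    Sat S 𝔛 v w (betaF c i x B) ↔
      S.BetaRel (c.val S v) (i.val S v) (x.val S v) := by
  unfold AStr.BetaRel
  rw [betaF, sat_ex]
  refine exists_congr fun a => ?_
  rw [sat_ex]
  refine exists_congr fun b => ?_
  set v' := Function.update (Function.update v B a) (B+1) b with hv'
  have uB : v' B = a := by
    rw [hv', Function.update_of_ne (by omega), Function.update_self]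
  have uB1 : v' (B+1) = b := by rw [hv', Function.update_self]
  have e1 : ∀ t : PTerm, TBel t B → t.val S v' = t.val S v := by
    intro t ht
    rw [hv', val_upd S (TBel_mono ht (Nat.le_succ B)) le_rfl, val_upd S ht le_rfl]
  rw [sat_and, sat_pairF, sat_modF S 𝔛 v' w (TBel_var (by omega))
    (TBel_add TBel_one (TBel_mul (TBel_add (TBel_mono hi (by omega)) TBel_one)
      (TBel_var (by omega)))) (TBel_mono hx (by omega))]
  simp only [PTerm.val]
  rw [e1 c hc, e1 x hx, e1 i hi, uB, uB1]

/-! #### Sequence formulas -/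

def seqLenF (s l : PTerm) (B : ℕ) : Fml := Fml.ex B (pairF s (.var B) l)

lemma isArith_seqLenF {s l : PTerm} {B : ℕ} : (seqLenF s l B).IsArith :=
  isArith_ex isArith_pairF

lemma sat_seqLenF {M : Type} (S : AStr M) (𝔛 v w) {s l : PTerm} {B : ℕ}
    (hs : TBel s B) (hl : TBel l B) :
    Sat S 𝔛 v w (seqLenF s l B) ↔ S.SeqLen (s.val S v) (l.val S v) := by
  unfold AStr.SeqLen
  rw [seqLenF, sat_ex]
  refine exists_congr fun c => ?_
  rw [sat_pairF]
  simp only [PTerm.val]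
  rw [val_upd S hs le_rfl, val_upd S hl le_rfl, Function.update_self]

def seqAtF (s i x : PTerm) (B : ℕ) : Fml :=
  Fml.ex B (Fml.ex (B+1) ((pairF s (.var B) (.var (B+1))).and
    ((Fml.lt i (.var (B+1))).and (betaF (.var B) i x (B+2)))))

lemma isArith_seqAtF {s i x : PTerm} {B : ℕ} : (seqAtF s i x B).IsArith :=
  isArith_ex (isArith_ex (isArith_and isArith_pairF (isArith_and trivial isArith_betaF)))

lemma sat_seqAtF {M : Type} (S : AStr M) (𝔛 v w) {s i x : PTerm} {B : ℕ}
    (hs : TBel s B) (hi : TBel i B) (hx : TBel x B) :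
    Sat S 𝔛 v w (seqAtF s i x B) ↔ S.SeqAt (s.val S v) (i.val S v) (x.val S v) := by
  unfold AStr.SeqAt
  rw [seqAtF, sat_ex]
  refine exists_congr fun c => ?_
  rw [sat_ex]
  refine exists_congr fun l => ?_
  set v' := Function.update (Function.update v B c) (B+1) l with hv'
  have uB : v' B = c := by
    rw [hv', Function.update_of_ne (by omega), Function.update_self]
  have uB1 : v' (B+1) = l := by rw [hv', Function.update_self]
  have e1 : ∀ t : PTerm, TBel t B → t.val S v' = t.val S v := by
    intro t ht
    rw [hv', val_upd S (TBel_mono ht (Nat.le_succ B)) le_rfl, val_upd S ht le_rfl]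
  rw [sat_and, sat_pairF, sat_and, sat_lt,
    sat_betaF S 𝔛 v' w (TBel_var (by omega)) (TBel_mono hi (by omega))
      (TBel_mono hx (by omega))]
  simp only [PTerm.val]
  rw [e1 s hs, e1 i hi, e1 x hx, uB, uB1]

/-! #### Entries, conjunctions and the master diagram formula -/

def entryF (s i z : PTerm) (k x : ℕ) (B : ℕ) : Fml :=
  if k = x then seqAtF s (numeral k) z B
  else Fml.ex B (Fml.ex (B+1) ((pairF (.var (B+1)) i (.var B)).and
    ((Fml.mem (.var (B+1)) (k+1)).and (seqAtF s (numeral k) (.var B) (B+2)))))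

lemma isArith_entryF {s i z : PTerm} {k x B : ℕ} : (entryF s i z k x B).IsArith := by
  unfold entryF
  split
  · exact isArith_seqAtF
  · exact isArith_ex (isArith_ex (isArith_and isArith_pairF
      (isArith_and trivial isArith_seqAtF)))

lemma sat_entryF {M : Type} (S : AStr M) (𝔛 v w) {s i z : PTerm} {k x B : ℕ}
    (hs : TBel s B) (hi : TBel i B) (hz : TBel z B) :
    Sat S 𝔛 v w (entryF s i z k x B) ↔
      (if k = x then S.SeqAt (s.val S v) (S.num k) (z.val S v)
        else ∃ y, y ∈ S.SliceAt (w (k+1)) (i.val S v) ∧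
          S.SeqAt (s.val S v) (S.num k) y) := by
  unfold entryF
  by_cases hkx : k = x
  · rw [if_pos hkx, if_pos hkx, sat_seqAtF S 𝔛 v w hs TBel_numeral hz, val_numeral]
  · rw [if_neg hkx, if_neg hkx]
    have key : Sat S 𝔛 v w (Fml.ex B (Fml.ex (B+1) ((pairF (.var (B+1)) i (.var B)).and
        ((Fml.mem (.var (B+1)) (k+1)).and (seqAtF s (numeral k) (.var B) (B+2)))))) ↔
        ∃ y q, S.PairRel q (i.val S v) y ∧ q ∈ w (k+1) ∧
          S.SeqAt (s.val S v) (S.num k) y := by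
      rw [sat_ex]
      refine exists_congr fun y => ?_
      rw [sat_ex]
      refine exists_congr fun q => ?_
      set v' := Function.update (Function.update v B y) (B+1) q with hv'
      have uB : v' B = y := by
        rw [hv', Function.update_of_ne (by omega), Function.update_self]
      have uB1 : v' (B+1) = q := by rw [hv', Function.update_self]
      have e1 : ∀ t : PTerm, TBel t B → t.val S v' = t.val S v := by
        intro t ht
        rw [hv', val_upd S (TBel_mono ht (Nat.le_succ B)) le_rfl, val_upd S ht le_rfl]
      rw [sat_and, sat_pairF, sat_and, sat_mem,
        sat_seqAtF S 𝔛 v' w (TBel_mono hs (by omega)) TBel_numeral (TBel_var (by omega)),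
        val_numeral]
      simp only [PTerm.val]
      rw [e1 s hs, e1 i hi, uB, uB1]
    rw [key]
    constructor
    · rintro ⟨y, q, h1, h2, h3⟩
      exact ⟨y, ⟨q, h1, h2⟩, h3⟩
    · rintro ⟨y, ⟨q, h1, h2⟩, h3⟩
      exact ⟨y, q, h1, h2, h3⟩

def conjF : List Fml → Fml
  | [] => .eq .zero .zero
  | φ :: l => φ.and (conjF l)

lemma isArith_conjF {L : List Fml} (h : ∀ φ ∈ L, φ.IsArith) : (conjF L).IsArith := by
  induction L with
  | nil => trivial
  | cons φ l ih =>
      exact isArith_and (h φ (by simp)) (ih fun ψ hψ => h ψ (by simp [hψ]))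

lemma sat_conjF {M : Type} (S : AStr M) (𝔛 v w) (L : List Fml) :
    Sat S 𝔛 v w (conjF L) ↔ ∀ φ ∈ L, Sat S 𝔛 v w φ := by
  induction L with
  | nil => simp [conjF, sat_eq]
  | cons φ l ih => simp [conjF, sat_and, ih]

def diagF (n l x : ℕ) (i z : PTerm) (B : ℕ) : Fml :=
  Fml.ex B (Fml.ex (B+1) ((seqLenF (.var B) (numeral l) (B+2)).and
    ((conjF ((List.range l).map fun k => entryF (.var B) i z k x (B+2))).and
    ((pairF (.var (B+1)) (numeral n) (.var B)).and (.mem (.var (B+1)) 0)))))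

lemma isArith_diagF {n l x : ℕ} {i z : PTerm} {B : ℕ} : (diagF n l x i z B).IsArith := by
  refine isArith_ex (isArith_ex (isArith_and isArith_seqLenF (isArith_and ?_
    (isArith_and isArith_pairF trivial))))
  refine isArith_conjF fun φ hφ => ?_
  simp only [List.mem_map] at hφ
  obtain ⟨k, _, rfl⟩ := hφ
  exact isArith_entryF

lemma sat_diagF {M : Type} (S : AStr M) (𝔛 v w) {n l x B : ℕ} {i z : PTerm}
    (hi : TBel i B) (hz : TBel z B) :
    Sat S 𝔛 v w (diagF n l x i z B) ↔
      ∃ s p, S.SeqLen s (S.num l) ∧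
        (∀ k < l, if k = x then S.SeqAt s (S.num k) (z.val S v)
          else ∃ y, y ∈ S.SliceAt (w (k+1)) (i.val S v) ∧ S.SeqAt s (S.num k) y) ∧
        S.PairRel p (S.num n) s ∧ p ∈ w 0 := by
  rw [diagF, sat_ex]
  refine exists_congr fun s => ?_
  rw [sat_ex]
  refine exists_congr fun p => ?_
  set v' := Function.update (Function.update v B s) (B+1) p with hv'
  have uB : v' B = s := by
    rw [hv', Function.update_of_ne (by omega), Function.update_self]
  have uB1 : v' (B+1) = p := by rw [hv', Function.update_self]
  have e1 : ∀ t : PTerm, TBel t B → t.val S v' = t.val S v := by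
    intro t ht
    rw [hv', val_upd S (TBel_mono ht (Nat.le_succ B)) le_rfl, val_upd S ht le_rfl]
  rw [sat_and, sat_seqLenF S 𝔛 v' w (TBel_var (by omega)) TBel_numeral, sat_and,
    sat_conjF, sat_and, sat_pairF, sat_mem, val_numeral, val_numeral]
  simp only [PTerm.val, uB, uB1, List.mem_map, List.mem_range]
  constructor
  · rintro ⟨h1, h2, h3, h4⟩
    refine ⟨h1, fun k hk => ?_, h3, h4⟩
    have := h2 _ ⟨k, hk, rfl⟩
    rw [sat_entryF S 𝔛 v' w (TBel_var (by omega)) (TBel_mono hi (by omega))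
      (TBel_mono hz (by omega))] at this
    simp only [PTerm.val, uB] at this
    rwa [e1 i hi, e1 z hz] at this
  · rintro ⟨h1, h2, h3, h4⟩
    refine ⟨h1, ?_, h3, h4⟩
    rintro φ ⟨k, hk, rfl⟩
    rw [sat_entryF S 𝔛 v' w (TBel_var (by omega)) (TBel_mono hi (by omega))
      (TBel_mono hz (by omega))]
    simp only [PTerm.val, uB]
    rw [e1 i hi, e1 z hz]
    exact h2 k hk

end Builders

section Transfer

/-- Term values commute with the isomorphism `ϱ`. -/
lemma val_hom {M KT : Type} {K : AStr KT} {K0 : AStr M} {ϱ : KT → M}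
    (hr0 : ϱ K.zero = K0.zero) (hr1 : ϱ K.one = K0.one)
    (hradd : ∀ a b, ϱ (K.add a b) = K0.add (ϱ a) (ϱ b))
    (hrmul : ∀ a b, ϱ (K.mul a b) = K0.mul (ϱ a) (ϱ b))
    (v : ℕ → KT) : ∀ t : PTerm, t.val K0 (fun k => ϱ (v k)) = ϱ (t.val K v) := by
  intro t
  induction t with
  | var n => rfl
  | zero => exact hr0.symm
  | one => exact hr1.symm
  | add t u iht ihu => simp [PTerm.val, iht, ihu, hradd]
  | mul t u iht ihu => simp [PTerm.val, iht, ihu, hrmul]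

/-- First-order satisfaction transfers along the isomorphism `ϱ`. -/
lemma satFO_iso {M KT : Type} {K : AStr KT} {K0 : AStr M} {ϱ : KT → M}
    (hrbij : Function.Bijective ϱ)
    (hr0 : ϱ K.zero = K0.zero) (hr1 : ϱ K.one = K0.one)
    (hradd : ∀ a b, ϱ (K.add a b) = K0.add (ϱ a) (ϱ b))
    (hrmul : ∀ a b, ϱ (K.mul a b) = K0.mul (ϱ a) (ϱ b))
    (hrlt : ∀ a b, K.lt a b ↔ K0.lt (ϱ a) (ϱ b)) :
    ∀ (φ : Fml) (v : ℕ → KT), φ.IsFO →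
      (SatFO K v φ ↔ SatFO K0 (fun k => ϱ (v k)) φ) := by
  intro φ
  induction φ with
  | eq t u =>
      intro v _
      show t.val K v = u.val K v ↔ t.val K0 _ = u.val K0 _
      rw [val_hom hr0 hr1 hradd hrmul, val_hom hr0 hr1 hradd hrmul]
      exact ⟨congrArg ϱ, fun e => hrbij.1 e⟩
  | lt t u =>
      intro v _
      show K.lt (t.val K v) (u.val K v) ↔ K0.lt (t.val K0 _) (u.val K0 _)
      rw [val_hom hr0 hr1 hradd hrmul, val_hom hr0 hr1 hradd hrmul]
      exact hrlt _ _
  | mem t k => intro _ h; exact absurd h (by simp [Fml.IsFO])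
  | not φ ih => intro v h; exact not_congr (ih v h)
  | imp φ ψ ihφ ihψ => intro v h; exact imp_congr (ihφ v h.1) (ihψ v h.2)
  | all x φ ih =>
      intro v h
      show (∀ a, Sat K _ _ _ φ) ↔ (∀ b, Sat K0 _ _ _ φ)
      constructor
      · intro hall b
        obtain ⟨a, rfl⟩ := hrbij.2 b
        have := (ih (Function.update v x a) h).1 (hall a)
        have e : (fun k => ϱ (Function.update v x a k)) =
            Function.update (fun k => ϱ (v k)) x (ϱ a) := by
          funext k
          simp [Function.update_apply, apply_ite ϱ]
        rwa [e] at this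
      · intro hall a
        refine (ih (Function.update v x a) h).2 ?_
        have e : (fun k => ϱ (Function.update v x a k)) =
            Function.update (fun k => ϱ (v k)) x (ϱ a) := by
          funext k
          simp [Function.update_apply, apply_ite ϱ]
        rw [e]
        exact hall (ϱ a)
  | allS k φ ih => intro _ h; exact absurd h (by simp [Fml.IsFO])

end Transfer

section Core

variable {M : Type} {S : AStr M} {𝔛 : Set (Set M)} {K0 : AStr M} {C : Set M}

/-- The master diagram hypothesis, abbreviated. -/
def DiagHyp (S K0 : AStr M) (C : Set M) : Prop :=
  ∀ (φ : Fml) (l : ℕ) (v : ℕ → M), Fml.IsFO φ → φ.freeN ⊆ Finset.range l →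
    (SatFO K0 v φ ↔ ∃ s p, S.SeqLen s (S.num l) ∧
      (∀ i < l, S.SeqAt s (S.num i) (v i)) ∧
      S.PairRel p (S.num (Fml.code φ)) s ∧ p ∈ C)

lemma entries_iff {w : ℕ → Set M} {g : ℕ → M → M} {l x : ℕ} {iv zv s : M}
    (hw1 : ∀ k, k < l → k ≠ x → ∀ b, g k iv = b ↔ b ∈ S.SliceAt (w (k+1)) iv) :
    (∀ k < l, if k = x then S.SeqAt s (S.num k) zv
      else ∃ y, y ∈ S.SliceAt (w (k+1)) iv ∧ S.SeqAt s (S.num k) y) ↔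
    (∀ k < l, S.SeqAt s (S.num k) (if k = x then zv else g k iv)) := by
  refine forall₂_congr fun k hk => ?_
  by_cases hkx : k = x
  · simp [hkx]
  · rw [if_neg hkx, if_neg hkx]
    constructor
    · rintro ⟨y, hy, hs⟩
      rwa [(hw1 k hk hkx y).2 hy]
    · intro hs
      exact ⟨g k iv, ((hw1 k hk hkx _).1 rfl), hs⟩

/-- Truth sets of first-order formulas (with values given by coded functions)
belong to `𝔛`. -/
lemma truthset_mem (hACA : SatACA0 S 𝔛) (hC : C ∈ 𝔛) (hdiag : DiagHyp S K0 C)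
    {g : ℕ → M → M} (hg : ∀ k, S.CodedFun 𝔛 (g k)) (φ : Fml) (hφ : φ.IsFO) :
    {i : M | SatFO K0 (fun k => g k i) φ} ∈ 𝔛 := by
  classical
  choose G hGX hGs using hg
  set l := (φ.freeN.sup id) + 1 with hl
  have hfr : φ.freeN ⊆ Finset.range l := fun k hk =>
    Finset.mem_range.2 (Nat.lt_succ_of_le (Finset.le_sup (f := id) hk))
  set n := Fml.code φ with hn
  set w : ℕ → Set M := fun j => if j = 0 then C else G (j-1) with hw
  have hwX : ∀ j, w j ∈ 𝔛 := by
    intro j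
    by_cases hj : j = 0 <;> simp [hw, hj, hC, hGX]
  have hX := hACA.2.2 (diagF n l l (.var 0) .zero 1) 0 isArith_diagF
    (fun _ => S.zero) w hwX
  have hset : {a : M | Sat S 𝔛 (Function.update (fun _ => S.zero) 0 a) w
      (diagF n l l (.var 0) .zero 1)} = {i : M | SatFO K0 (fun k => g k i) φ} := by
    ext i
    rw [Set.mem_setOf_eq, Set.mem_setOf_eq,
      sat_diagF S 𝔛 _ w (TBel_var (by omega)) TBel_zero]
    have hiv : (PTerm.var 0).val S (Function.update (fun _ => S.zero) 0 i) = i := by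
      simp [PTerm.val]
    rw [hdiag φ l (fun k => g k i) hφ hfr]
    refine exists_congr fun s => ?_
    refine exists_congr fun p => ?_
    have hw0 : w 0 = C := by simp [hw]
    have hwk : ∀ k, k < l → k ≠ l → ∀ b, g k i = b ↔ b ∈ S.SliceAt (w (k+1)) i := by
      intro k _ _ b
      have : w (k+1) = G k := by simp [hw]
      rw [this]
      exact hGs k i b
    rw [hiv] at *
    rw [hw0]
    constructor
    · rintro ⟨h1, h2, h3, h4⟩
      refine ⟨h1, ?_, h3, h4⟩
      have := (entries_iff (g := g) (zv := PTerm.zero.val S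
        (Function.update (fun _ => S.zero) 0 i)) hwk).1 h2
      intro k hk
      have hkl : k ≠ l := by omega
      have := this k hk
      rwa [if_neg hkl] at this
    · rintro ⟨h1, h2, h3, h4⟩
      refine ⟨h1, ?_, h3, h4⟩
      refine (entries_iff (g := g) (zv := PTerm.zero.val S
        (Function.update (fun _ => S.zero) 0 i)) hwk).2 ?_
      intro k hk
      rw [if_neg (by omega : k ≠ l)]
      exact h2 k hk
  rwa [hset] at hX


/-- Pointwise term values of coded functions are coded. -/
lemma coded_val (hACA : SatACA0 S 𝔛) (hC : C ∈ 𝔛) (hdiag : DiagHyp S K0 C)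
    {g : ℕ → M → M} (hg : ∀ k, S.CodedFun 𝔛 (g k)) (t : PTerm) :
    S.CodedFun 𝔛 (fun i => t.val K0 (fun k => g k i)) := by
  classical
  choose G hGX hGs using hg
  set l := (t.vars.sup id) + 1 with hldef
  have hvt : ∀ k ∈ t.vars, k < l := fun k hk =>
    Nat.lt_succ_of_le (Finset.le_sup (f := id) hk)
  set ψ : Fml := .eq (.var l) t with hψ
  have hψfo : ψ.IsFO := trivial
  have hfr : ψ.freeN ⊆ Finset.range (l+1) := by
    intro k hk
    simp only [hψ, Fml.freeN, PTerm.vars, Finset.mem_union, Finset.mem_singleton] at hk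
    rcases hk with rfl | hk
    · simp
    · simp only [Finset.mem_range]
      have := hvt k hk
      omega
  set n := Fml.code ψ with hn
  set w : ℕ → Set M := fun j => if j = 0 then C else G (j-1) with hw
  have hwX : ∀ j, w j ∈ 𝔛 := by
    intro j
    by_cases hj : j = 0 <;> simp [hw, hj, hC, hGX]
  set F : Fml := .ex 1 (.ex 2 ((pairF (.var 0) (.var 1) (.var 2)).and
    (diagF n (l+1) l (.var 1) (.var 2) 3))) with hF
  have hFar : F.IsArith :=
    isArith_ex (isArith_ex (isArith_and isArith_pairF isArith_diagF))
  have hGset := hACA.2.2 F 0 hFar (fun _ => S.zero) w hwX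
  have hmem : ∀ p : M, (Sat S 𝔛 (Function.update (fun _ => S.zero) 0 p) w F) ↔
      ∃ i m, S.PairRel p i m ∧ m = t.val K0 (fun k => g k i) := by
    intro p
    rw [hF, sat_ex]
    refine exists_congr fun i => ?_
    rw [sat_ex]
    refine exists_congr fun m => ?_
    set v' := Function.update (Function.update (Function.update
      (fun _ => S.zero) 0 p) 1 i) 2 m with hv'
    have u0 : v' 0 = p := by
      rw [hv', Function.update_of_ne (by omega), Function.update_of_ne (by omega),
        Function.update_self]
    have u1 : v' 1 = i := by
      rw [hv', Function.update_of_ne (by omega), Function.update_self]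
    have u2 : v' 2 = m := by rw [hv', Function.update_self]
    rw [sat_and, sat_pairF, sat_diagF S 𝔛 v' w (TBel_var (by omega)) (TBel_var (by omega))]
    have hval : ∀ tt : PTerm, tt = PTerm.var 0 ∨ tt = PTerm.var 1 ∨ tt = PTerm.var 2 →
        True := fun _ _ => trivial
    simp only [PTerm.val, u0, u1, u2]
    refine and_congr Iff.rfl ?_
    have hwk : ∀ k, k < l+1 → k ≠ l → ∀ b, g k i = b ↔ b ∈ S.SliceAt (w (k+1)) i := by
      intro k _ _ b
      have : w (k+1) = G k := by simp [hw]
      rw [this]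
      exact hGs k i b
    have hw0 : w 0 = C := by simp [hw]
    have hdiag' := hdiag ψ (l+1) (fun k => if k = l then m else g k i) hψfo hfr
    have hsat : SatFO K0 (fun k => if k = l then m else g k i) ψ ↔
        m = t.val K0 (fun k => g k i) := by
      show (PTerm.var l).val K0 _ = t.val K0 _ ↔ _
      simp only [PTerm.val, eq_self_iff_true, if_true]
      rw [val_congr K0 t (v' := fun k => g k i)
        (fun k hk => by rw [if_neg (by have := hvt k hk; omega)])]
    rw [← hn] at hdiag'
    constructor
    · rintro ⟨s, q, h1, h2, h3, h4⟩
      rw [← hsat, hdiag']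
      refine ⟨s, q, h1, ?_, h3, hw0 ▸ h4⟩
      intro k hk
      have := (entries_iff (g := g) hwk).1 h2 k hk
      exact this
    · intro hm
      rw [← hsat, hdiag'] at hm
      obtain ⟨s, q, h1, h2, h3, h4⟩ := hm
      refine ⟨s, q, h1, ?_, h3, hw0 ▸ h4⟩
      exact (entries_iff (g := g) hwk).2 h2
  refine ⟨_, hGset, ?_⟩
  intro a b
  constructor
  · intro hab
    obtain ⟨p, hp⟩ := pair_exists hACA hC a b
    exact mem_sliceAt.2 ⟨p, hp, (hmem p).2 ⟨a, b, hp, hab.symm⟩⟩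
  · intro hb
    obtain ⟨p, hpab, hpG⟩ := mem_sliceAt.1 hb
    obtain ⟨i, m, hpim, hval⟩ := (hmem p).1 hpG
    obtain ⟨h5, h6⟩ := pair_inj hACA.1 hpab hpim
    subst h5; subst h6
    exact hval.symm


/-- Definable Skolem functions: a coded function choosing witnesses of a
first-order property over `K0`. -/
lemma skolem_fun (hACA : SatACA0 S 𝔛) (hC : C ∈ 𝔛) (hdiag : DiagHyp S K0 C)
    {g : ℕ → M → M} (hg : ∀ k, S.CodedFun 𝔛 (g k)) (ψ : Fml) (hψfo : ψ.IsFO)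
    (x l : ℕ) (hx : x < l) (hfr : ψ.freeN ⊆ Finset.range l) :
    ∃ f0 : M → M, S.CodedFun 𝔛 f0 ∧ ∀ i : M,
      (∃ m, SatFO K0 (fun k => if k = x then m else g k i) ψ) →
      SatFO K0 (fun k => if k = x then f0 i else g k i) ψ := by
  classical
  choose G hGX hGs using hg
  set Θ : M → M → Prop :=
    fun i m => SatFO K0 (fun k => if k = x then m else g k i) ψ with hΘ
  set n := Fml.code ψ with hn
  set w : ℕ → Set M := fun j => if j = 0 then C else G (j-1) with hw
  have hwX : ∀ j, w j ∈ 𝔛 := by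
    intro j
    by_cases hj : j = 0 <;> simp [hw, hj, hC, hGX]
  have hw0 : w 0 = C := by simp [hw]
  have keyD : ∀ (zT : PTerm), TBel zT 4 → ∀ v' : ℕ → M,
      (Sat S 𝔛 v' w (diagF n l x (.var 1) zT 4) ↔ Θ (v' 1) (zT.val S v')) := by
    intro zT hzT v'
    rw [sat_diagF S 𝔛 v' w (TBel_var (by omega)) hzT]
    have hwk : ∀ k, k < l → k ≠ x → ∀ b,
        g k ((PTerm.var 1).val S v') = b ↔
          b ∈ S.SliceAt (w (k+1)) ((PTerm.var 1).val S v') := by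
      intro k _ _ b
      have : w (k+1) = G k := by simp [hw]
      rw [this]
      exact hGs k _ b
    have hΘiff : Θ (v' 1) (zT.val S v') ↔ ∃ s p, S.SeqLen s (S.num l) ∧
        (∀ k < l, S.SeqAt s (S.num k) (if k = x then zT.val S v' else g k (v' 1))) ∧
        S.PairRel p (S.num n) s ∧ p ∈ C :=
      hdiag ψ l (fun k => if k = x then zT.val S v' else g k (v' 1)) hψfo hfr
    rw [hΘiff]
    refine exists_congr fun s => exists_congr fun p =>
      and_congr Iff.rfl (and_congr ?_ (by rw [hw0]))
    exact entries_iff hwk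
  have hWX : ∀ i : M, {m : M | Θ i m} ∈ 𝔛 := by
    intro i
    have hX := hACA.2.2 (diagF n l x (.var 1) (.var 0) 4) 0 isArith_diagF
      (Function.update (fun _ => S.zero) 1 i) w hwX
    have hset : {m : M | Sat S 𝔛 (Function.update (Function.update
        (fun _ => S.zero) 1 i) 0 m) w (diagF n l x (.var 1) (.var 0) 4)} =
        {m : M | Θ i m} := by
      ext m
      rw [Set.mem_setOf_eq, Set.mem_setOf_eq,
        keyD (.var 0) (TBel_var (by omega)) _]
      have e1 : Function.update (Function.update (fun _ => S.zero) 1 i) 0 m 1 = i := by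
        rw [Function.update_of_ne (by omega), Function.update_self]
      have e0 : (PTerm.var 0).val S (Function.update (Function.update
          (fun _ => S.zero) 1 i) 0 m) = m := by
        simp [PTerm.val]
      rw [e1, e0]
    rwa [hset] at hX
  have hls : ∀ i : M, (∃ m, Θ i m) → ∃ m, Θ i m ∧ ∀ y, Θ i y → S.le m y := by
    intro i hex
    obtain ⟨m0, hm0⟩ := hex
    obtain ⟨m, hm, hleast⟩ := pm_lnp hACA (hWX i) (show m0 ∈ {m : M | Θ i m} from hm0)
    exact ⟨m, hm, fun y hy => hleast y hy⟩
  set f0 : M → M := fun i => if h : ∃ m, Θ i m then (hls i h).choose else S.zero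
    with hf0def
  have hf0 : ∀ i (h : ∃ m, Θ i m), Θ i (f0 i) ∧ ∀ y, Θ i y → S.le (f0 i) y := by
    intro i h
    have : f0 i = (hls i h).choose := by rw [hf0def]; exact dif_pos h
    rw [this]
    exact (hls i h).choose_spec
  have hf0Z : ∀ i, ¬ (∃ m, Θ i m) → f0 i = S.zero := by
    intro i h
    rw [hf0def]
    exact dif_neg h
  -- the coding formula
  set θ₂ : Fml := diagF n l x (.var 1) (.var 2) 4 with hθ₂def
  set θ₃ : Fml := diagF n l x (.var 1) (.var 3) 4 with hθ₃def
  set hasW : Fml := Fml.ex 3 θ₃ with hhasWdef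
  set noSm : Fml := Fml.all 3 (.imp (.lt (.var 3) (.var 2)) (.not θ₃)) with hnoSmdef
  set skF : Fml := .ex 1 (.ex 2 ((pairF (.var 0) (.var 1) (.var 2)).and
    ((hasW.and (θ₂.and noSm)).or ((hasW.not).and (.eq (.var 2) .zero))))) with hskFdef
  have hskar : skF.IsArith := by
    rw [hskFdef, hhasWdef, hnoSmdef, hθ₂def, hθ₃def]
    exact isArith_ex (isArith_ex (isArith_and isArith_pairF (isArith_or
      (isArith_and (isArith_ex isArith_diagF) (isArith_and isArith_diagF
        (isArith_all (isArith_imp trivial (isArith_not isArith_diagF)))))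
      (isArith_and (isArith_not (isArith_ex isArith_diagF)) trivial))))
  have hGset := hACA.2.2 skF 0 hskar (fun _ => S.zero) w hwX
  have hmem : ∀ p : M, (Sat S 𝔛 (Function.update (fun _ => S.zero) 0 p) w skF) ↔
      ∃ i m, S.PairRel p i m ∧
        (((∃ z, Θ i z) ∧ Θ i m ∧ ∀ z, S.lt z m → ¬ Θ i z) ∨
          (¬ (∃ z, Θ i z) ∧ m = S.zero)) := by
    intro p
    rw [hskFdef, sat_ex]
    refine exists_congr fun i => ?_
    rw [sat_ex]
    refine exists_congr fun m => ?_
    set v' := Function.update (Function.update (Function.update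
      (fun _ => S.zero) 0 p) 1 i) 2 m with hv'
    have u0 : v' 0 = p := by
      rw [hv', Function.update_of_ne (by omega), Function.update_of_ne (by omega),
        Function.update_self]
    have u1 : v' 1 = i := by
      rw [hv', Function.update_of_ne (by omega), Function.update_self]
    have u2 : v' 2 = m := by rw [hv', Function.update_self]
    have hθ2 : Sat S 𝔛 v' w θ₂ ↔ Θ i m := by
      rw [hθ₂def, keyD (.var 2) (TBel_var (by omega)) v']
      show Θ (v' 1) (v' 2) ↔ _
      rw [u1, u2]
    have hθ3 : ∀ z, Sat S 𝔛 (Function.update v' 3 z) w θ₃ ↔ Θ i z := by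
      intro z
      rw [hθ₃def, keyD (.var 3) (TBel_var (by omega)) _]
      show Θ (Function.update v' 3 z 1) (Function.update v' 3 z 3) ↔ _
      rw [Function.update_self, Function.update_of_ne (by omega), u1]
    have hhw : Sat S 𝔛 v' w hasW ↔ ∃ z, Θ i z := by
      rw [hhasWdef, sat_ex]
      exact exists_congr fun z => hθ3 z
    have hns : Sat S 𝔛 v' w noSm ↔ ∀ z, S.lt z m → ¬ Θ i z := by
      rw [hnoSmdef, sat_all]
      refine forall_congr' fun z => ?_
      rw [sat_imp, sat_lt, sat_not, hθ3 z]
      show (S.lt (Function.update v' 3 z 3) (Function.update v' 3 z 2) → _) ↔ _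
      rw [Function.update_self, Function.update_of_ne (by omega), u2]
    rw [sat_and, sat_pairF, sat_or, sat_and, sat_and, sat_and, sat_not, sat_eq,
      hθ2, hhw, hns]
    simp only [PTerm.val]
    rw [u0, u1, u2]
  refine ⟨f0, ⟨_, hGset, ?_⟩, fun i h => (hf0 i h).1⟩
  intro a b
  constructor
  · intro hab
    obtain ⟨p, hp⟩ := pair_exists hACA hC a b
    refine mem_sliceAt.2 ⟨p, hp, (hmem p).2 ⟨a, b, hp, ?_⟩⟩
    by_cases h : ∃ m, Θ a m
    · left
      obtain ⟨h1, h2⟩ := hf0 a h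
      rw [hab] at h1 h2
      refine ⟨h, h1, fun z hz hΘz => ?_⟩
      rcases h2 z hΘz with hlt | heq
      · exact pm_ltIr hACA.1 z (pm_ltT hACA.1 _ _ _ hz hlt)
      · exact pm_ltIr hACA.1 z (heq ▸ hz)
    · right
      exact ⟨h, by rw [← hab, hf0Z a h]⟩
  · intro hb
    obtain ⟨p, hpab, hpG⟩ := mem_sliceAt.1 hb
    obtain ⟨i, m, hpim, hbig⟩ := (hmem p).1 hpG
    obtain ⟨h5, h6⟩ := pair_inj hACA.1 hpab hpim
    subst h5
    subst h6
    rcases hbig with ⟨hex, hΘb, hnosm⟩ | ⟨hnex, rfl⟩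
    · obtain ⟨h1, h2⟩ := hf0 a hex
      have hnlt : ¬ S.lt (f0 a) b := fun hlt => hnosm (f0 a) hlt h1
      rcases h2 b hΘb with hlt | heq
      · exact absurd hlt hnlt
      · exact heq
    · exact hf0Z a hnex

end Core

/-- Łoś's theorem for the restricted ultrapower `N = ∏_𝔛 K / U`. -/
theorem restricted_ultrapower_los
    {M KT NT : Type} (S : AStr M) (𝔛 : Set (Set M)) (T : Set Fml) (A : Set M)
    (K : AStr KT) (j : M → KT) (K0 : AStr M) (C : Set M) (ϱ : KT → M)
    (U : Set (Set M)) (SN : AStr NT) (π : (M → KT) → NT)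
    -- the second-order structure (M,𝔛) ⊨ ACA₀
    (hACA : SatACA0 S 𝔛)
    -- T ⊇ PA is a theory coded in 𝔛 with M ⊨ Con_T
    (hSent : ∀ φ ∈ T, IsFOSentence φ) (hPA : PAax ⊆ T)
    (hA : A ∈ 𝔛) (hTcode : ∀ n : ℕ, (S.num n ∈ A ↔ n ∈ theoryCode T))
    (hCon : S.SatConTheory T)
    -- M ⊆_e K : j embeds M onto an initial segment of K
    (hjinj : Function.Injective j)
    (hj0 : j S.zero = K.zero) (hj1 : j S.one = K.one)
    (hjadd : ∀ a b, j (S.add a b) = K.add (j a) (j b))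
    (hjmul : ∀ a b, j (S.mul a b) = K.mul (j a) (j b))
    (hjlt : ∀ a b, S.lt a b ↔ K.lt (j a) (j b))
    (hjinit : ∀ (x : KT) (a : M), K.lt x (j a) → ∃ b : M, j b = x)
    -- K₀ ⊨ T has domain M and its elementary diagram is coded by C ∈ 𝔛
    (hK0T : ModelsT K0 T) (hC : C ∈ 𝔛)
    (hdiag : ∀ (φ : Fml) (l : ℕ) (v : ℕ → M), Fml.IsFO φ → φ.freeN ⊆ Finset.range l →
      (SatFO K0 v φ ↔ ∃ s p, S.SeqLen s (S.num l) ∧ (∀ i < l, S.SeqAt s (S.num i) (v i)) ∧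
        S.PairRel p (S.num (Fml.code φ)) s ∧ p ∈ C))
    -- ϱ : K ≅ K₀ is an isomorphism
    (hrbij : Function.Bijective ϱ)
    (hr0 : ϱ K.zero = K0.zero) (hr1 : ϱ K.one = K0.one)
    (hradd : ∀ a b, ϱ (K.add a b) = K0.add (ϱ a) (ϱ b))
    (hrmul : ∀ a b, ϱ (K.mul a b) = K0.mul (ϱ a) (ϱ b))
    (hrlt : ∀ a b, K.lt a b ↔ K0.lt (ϱ a) (ϱ b))
    -- ϱ ∘ j is the canonical embedding of M into K₀, and it is coded in 𝔛
    (hcan0 : ϱ (j S.zero) = K0.zero)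
    (hcansucc : ∀ a, ϱ (j (S.add a S.one)) = K0.add (ϱ (j a)) K0.one)
    (hcancod : S.CodedFun 𝔛 (fun a => ϱ (j a)))
    -- U is an ultrafilter on P_𝔛
    (hU : IsUltraOn (S.PX 𝔛) U)
    -- (NT, SN, π) realizes the restricted ultrapower N = ∏_𝔛 K / U :
    -- π maps ∏_𝔛 K (the functions f with ϱ ∘ f coded in 𝔛) onto N,
    -- identifying f and g exactly when they agree on a set in U
    (hsurj : ∀ n : NT, ∃ f : M → KT, S.CodedFun 𝔛 (fun a => ϱ (f a)) ∧ π f = n)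
    (heq : ∀ f g : M → KT, S.CodedFun 𝔛 (fun a => ϱ (f a)) →
      S.CodedFun 𝔛 (fun a => ϱ (g a)) → (π f = π g ↔ {a : M | f a = g a} ∈ U))
    (hzero : ∀ f : M → KT, S.CodedFun 𝔛 (fun a => ϱ (f a)) → (∀ a, f a = K.zero) →
      π f = SN.zero)
    (hone : ∀ f : M → KT, S.CodedFun 𝔛 (fun a => ϱ (f a)) → (∀ a, f a = K.one) →
      π f = SN.one)
    (hadd : ∀ f g h : M → KT, S.CodedFun 𝔛 (fun a => ϱ (f a)) →
      S.CodedFun 𝔛 (fun a => ϱ (g a)) → S.CodedFun 𝔛 (fun a => ϱ (h a)) →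
      (∀ a, h a = K.add (f a) (g a)) → SN.add (π f) (π g) = π h)
    (hmul : ∀ f g h : M → KT, S.CodedFun 𝔛 (fun a => ϱ (f a)) →
      S.CodedFun 𝔛 (fun a => ϱ (g a)) → S.CodedFun 𝔛 (fun a => ϱ (h a)) →
      (∀ a, h a = K.mul (f a) (g a)) → SN.mul (π f) (π g) = π h)
    (hlt : ∀ f g : M → KT, S.CodedFun 𝔛 (fun a => ϱ (f a)) →
      S.CodedFun 𝔛 (fun a => ϱ (g a)) →
      (SN.lt (π f) (π g) ↔ {a : M | K.lt (f a) (g a)} ∈ U)) :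
    ∀ (φ : Fml) (v : ℕ → M → KT), Fml.IsFO φ →
      (∀ k, S.CodedFun 𝔛 (fun a => ϱ (v k a))) →
      (SatFO SN (fun k => π (v k)) φ ↔ {i : M | SatFO K (fun k => v k i) φ} ∈ U) := by
  classical
  have hP : PAminusSem S := hACA.1
  have hDiag : DiagHyp S K0 C := hdiag
  -- truth sets are in 𝔛
  have hTS : ∀ (ψ : Fml) (v : ℕ → M → KT), ψ.IsFO →
      (∀ k, S.CodedFun 𝔛 (fun a => ϱ (v k a))) →
      {i : M | SatFO K (fun k => v k i) ψ} ∈ 𝔛 := by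
    intro ψ v hfo hcv
    have hmem := truthset_mem (K0 := K0) hACA hC hDiag (g := fun k a => ϱ (v k a)) hcv ψ hfo
    have hsame : {i : M | SatFO K (fun k => v k i) ψ} =
        {i : M | SatFO K0 (fun k => ϱ (v k i)) ψ} := by
      ext i
      exact satFO_iso hrbij hr0 hr1 hradd hrmul hrlt ψ (fun k => v k i) hfo
    rw [hsame]
    exact hmem
  -- pointwise term values are coded
  have hival : ∀ (t : PTerm) (v : ℕ → M → KT),
      (∀ k, S.CodedFun 𝔛 (fun a => ϱ (v k a))) →
      S.CodedFun 𝔛 (fun i => ϱ (t.val K (fun k => v k i))) := by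
    intro t v hcv
    have hfun : (fun i => ϱ (t.val K (fun k => v k i))) =
        fun i => t.val K0 (fun k => ϱ (v k i)) := by
      funext i
      rw [val_hom hr0 hr1 hradd hrmul]
    rw [hfun]
    exact coded_val hACA hC hDiag (g := fun k a => ϱ (v k a)) hcv t
  -- π commutes with term values
  have hπval : ∀ (t : PTerm) (v : ℕ → M → KT),
      (∀ k, S.CodedFun 𝔛 (fun a => ϱ (v k a))) →
      π (fun i => t.val K (fun k => v k i)) = t.val SN (fun k => π (v k)) := by
    intro t
    induction t with
    | var k => intro v hcv; rfl
    | zero => intro v hcv; exact hzero _ (hival .zero v hcv) (fun a => rfl)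
    | one => intro v hcv; exact hone _ (hival .one v hcv) (fun a => rfl)
    | add t u iht ihu =>
        intro v hcv
        have key := hadd (fun i => t.val K (fun k => v k i))
          (fun i => u.val K (fun k => v k i))
          (fun i => (PTerm.add t u).val K (fun k => v k i))
          (hival t v hcv) (hival u v hcv) (hival (.add t u) v hcv) (fun a => rfl)
        rw [← key, iht v hcv, ihu v hcv]
        rfl
    | mul t u iht ihu =>
        intro v hcv
        have key := hmul (fun i => t.val K (fun k => v k i))
          (fun i => u.val K (fun k => v k i))
          (fun i => (PTerm.mul t u).val K (fun k => v k i))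
          (hival t v hcv) (hival u v hcv) (hival (.mul t u) v hcv) (fun a => rfl)
        rw [← key, iht v hcv, ihu v hcv]
        rfl
  intro φ
  induction φ with
  | eq t u =>
      intro v hfo hv
      have h1 : SatFO SN (fun k => π (v k)) (.eq t u) ↔
          (PTerm.val SN (fun k => π (v k)) t = PTerm.val SN (fun k => π (v k)) u) :=
        Iff.rfl
      rw [h1, ← hπval t v hv, ← hπval u v hv,
        heq _ _ (hival t v hv) (hival u v hv)]
      exact Iff.rfl
  | lt t u =>
      intro v hfo hv
      have h1 : SatFO SN (fun k => π (v k)) (.lt t u) ↔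
          SN.lt (PTerm.val SN (fun k => π (v k)) t)
            (PTerm.val SN (fun k => π (v k)) u) := Iff.rfl
      rw [h1, ← hπval t v hv, ← hπval u v hv,
        hlt _ _ (hival t v hv) (hival u v hv)]
      exact Iff.rfl
  | mem t k =>
      intro v hfo hv
      exact absurd hfo (by simp [Fml.IsFO])
  | not φ ih =>
      intro v hfo hv
      have hT := hTS φ v hfo hv
      have h1 : SatFO SN (fun k => π (v k)) (.not φ) ↔
          ¬ SatFO SN (fun k => π (v k)) φ := Iff.rfl
      rw [h1, ih v hfo hv, ← u_notMem_iff hACA hU hT]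
      have hset : {i : M | SatFO K (fun k => v k i) φ}ᶜ =
          {i : M | SatFO K (fun k => v k i) (.not φ)} := rfl
      rw [hset]
  | imp φ ψ ihφ ihψ =>
      intro v hfo hv
      obtain ⟨h1, h2⟩ := hfo
      have hTφ := hTS φ v h1 hv
      have hTψ := hTS ψ v h2 hv
      have hTi := hTS (.imp φ ψ) v ⟨h1, h2⟩ hv
      have hrfl : SatFO SN (fun k => π (v k)) (.imp φ ψ) ↔
          (SatFO SN (fun k => π (v k)) φ → SatFO SN (fun k => π (v k)) ψ) := Iff.rfl
      rw [hrfl, ihφ v h1 hv, ihψ v h2 hv]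
      constructor
      · intro h
        by_cases hφU : {i : M | SatFO K (fun k => v k i) φ} ∈ U
        · refine u_up hU (h hφU) hTi ?_
          intro i hi
          simp only [Set.mem_setOf_eq] at hi ⊢
          exact fun _ => hi
        · have hc := (u_notMem_iff hACA hU hTφ).2 hφU
          refine u_up hU hc hTi ?_
          intro i hi
          simp only [Set.mem_compl_iff, Set.mem_setOf_eq] at hi ⊢
          exact fun hsat => absurd hsat hi
      · intro h hφU
        have hint := u_inter hACA hU h hφU
        refine u_up hU hint hTψ ?_
        intro i hi
        simp only [Set.mem_inter_iff, Set.mem_setOf_eq] at hi ⊢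
        exact hi.1 hi.2
  | all x φ ih =>
      intro v hfo hv
      have hfoφ : φ.IsFO := hfo
      have hTall := hTS (.all x φ) v hfo hv
      have hupd : ∀ (f : M → KT), S.CodedFun 𝔛 (fun a => ϱ (f a)) →
          ∀ k, S.CodedFun 𝔛 (fun a => ϱ (Function.update v x f k a)) := by
        intro f hf k
        rcases eq_or_ne k x with rfl | hne
        · simpa [Function.update_self] using hf
        · simpa [Function.update_of_ne hne] using hv k
      constructor
      · intro hsat
        rcases u_decide hACA hU hTall with h | h
        · exact h
        exfalso
        set l := (φ.freeN.sup id) + x + 2 with hl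
        have hxl : x < l := by omega
        have hfrψ : (Fml.not φ).freeN ⊆ Finset.range l := by
          intro k hk
          have hk' : k ∈ φ.freeN := hk
          have := Finset.le_sup (f := id) hk'
          simp only [Finset.mem_range]
          simp only [id] at this
          omega
        haveI : Nonempty KT := ⟨K.zero⟩
        obtain ⟨f0, hf0c, hf0w⟩ := skolem_fun (K0 := K0) hACA hC hDiag
          (g := fun k a => ϱ (v k a)) hv (Fml.not φ) hfoφ x l hxl hfrψ
        set f : M → KT := fun i => Function.invFun ϱ (f0 i) with hf
        have hϱf : ∀ i, ϱ (f i) = f0 i := fun i => Function.invFun_eq (hrbij.2 (f0 i))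
        have hfc : S.CodedFun 𝔛 (fun a => ϱ (f a)) := by
          have e : (fun a => ϱ (f a)) = f0 := funext hϱf
          rw [e]
          exact hf0c
        set v' := Function.update v x f with hv'def
        have hv' : ∀ k, S.CodedFun 𝔛 (fun a => ϱ (v' k a)) := hupd f hfc
        have hT' := hTS φ v' hfoφ hv'
        have hiso := satFO_iso hrbij hr0 hr1 hradd hrmul hrlt φ
        have hsub : {i : M | SatFO K (fun k => v k i) (.all x φ)}ᶜ ⊆
            {i : M | SatFO K (fun k => v' k i) φ}ᶜ := by
          intro i hi
          simp only [Set.mem_compl_iff, Set.mem_setOf_eq] at hi ⊢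
          have hex : ∃ aK : KT, ¬ SatFO K (Function.update (fun k => v k i) x aK) φ := by
            by_contra hno
            push_neg at hno
            exact hi (fun aK => hno aK)
          obtain ⟨aK, haK⟩ := hex
          have hm : ∃ m, SatFO K0 (fun k => if k = x then m else ϱ (v k i))
              (Fml.not φ) := by
            refine ⟨ϱ aK, ?_⟩
            show ¬ SatFO K0 _ φ
            intro hcon
            apply haK
            refine (hiso (Function.update (fun k => v k i) x aK) hfoφ).2 ?_
            have e : (fun k => ϱ (Function.update (fun k' => v k' i) x aK k)) =
                (fun k => if k = x then ϱ aK else ϱ (v k i)) := by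
              funext k
              simp [Function.update_apply, apply_ite ϱ]
            rw [e]
            exact hcon
          have hw := hf0w i hm
          intro hcon'
          apply hw
          show SatFO K0 _ φ
          have e2 : (fun k => if k = x then f0 i else ϱ (v k i)) =
              (fun k => ϱ (v' k i)) := by
            funext k
            rcases eq_or_ne k x with rfl | hne
            · simp only [hv'def, Function.update_self, eq_self_iff_true, if_true]
              exact (hϱf i).symm
            · simp [hv'def, Function.update_of_ne hne, hne]
          rw [e2]
          exact (hiso (fun k => v' k i) hfoφ).1 hcon'
        have hcompl' : {i : M | SatFO K (fun k => v' k i) φ}ᶜ ∈ U :=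
          u_up hU h (compl_mem hACA hT') hsub
        have hπv' : SatFO SN (fun k => π (v' k)) φ := by
          have hsatf : Sat SN Set.univ (Function.update (fun k => π (v k)) x (π f))
              (fun _ => ∅) φ := hsat (π f)
          have e : (fun k => π (v' k)) =
              Function.update (fun k => π (v k)) x (π f) := by
            funext k
            rcases eq_or_ne k x with rfl | hne
            · simp [hv'def, Function.update_self]
            · simp [hv'def, Function.update_of_ne hne]
          show Sat SN Set.univ _ _ φ
          rw [e]
          exact hsatf
        have hT'U := (ih v' hfoφ hv').1 hπv'
        exact u_not_both hACA hU hT'U hcompl'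
      · intro hT
        show ∀ a : NT, Sat SN Set.univ
          (Function.update (fun k => π (v k)) x a) (fun _ => ∅) φ
        intro a
        obtain ⟨gf, hgc, rfl⟩ := hsurj a
        set v' := Function.update v x gf with hv'def
        have hv' : ∀ k, S.CodedFun 𝔛 (fun a => ϱ (v' k a)) := hupd gf hgc
        have hsub : {i : M | SatFO K (fun k => v k i) (.all x φ)} ⊆
            {i : M | SatFO K (fun k => v' k i) φ} := by
          intro i hi
          simp only [Set.mem_setOf_eq] at hi ⊢
          have hinst : Sat K Set.univ
              (Function.update (fun k => v k i) x (gf i)) (fun _ => ∅) φ := hi (gf i)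
          have e : (fun k => v' k i) = Function.update (fun k => v k i) x (gf i) := by
            funext k
            rcases eq_or_ne k x with rfl | hne
            · simp [hv'def, Function.update_self]
            · simp [hv'def, Function.update_of_ne hne]
          show Sat K Set.univ _ _ φ
          rw [e]
          exact hinst
        have hT'U := u_up hU hT (hTS φ v' hfoφ hv') hsub
        have hπv' := (ih v' hfoφ hv').2 hT'U
        have e : (fun k => π (v' k)) = Function.update (fun k => π (v k)) x (π gf) := by
          funext k
          rcases eq_or_ne k x with rfl | hne
          · simp [hv'def, Function.update_self]
          · simp [hv'def, Function.update_of_ne hne]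
        show Sat SN Set.univ _ _ φ
        rw [← e]
        exact hπv'
  | allS k φ ih =>
      intro v hfo hv
      exact absurd hfo (by simp [Fml.IsFO])


end Paper
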